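/- arXiv:1701.02509 — 9 statements merged into one kernel-verified Lean document; each statement's English description precedes it below -/
import Mathlib

section
/- Let (S→, ≤, *) be a finite separation system, F ⊆ 2^{S→} a family of stars, and F' the essential core of F. Then the F'-tangles of S are precisely the F-tangles of S. -/
open Classical

namespace SepDuality

section Defs

variable {D : Type*} [PartialOrder D] {V : Type*}

/-- `r` is trivial in the separation (sub)system `S`: some `s ∈ S` satisfies `r < s` and
`r < s*`. -/
def TrivialIn (star : D → D) (S : Set D) (r : D) : Prop :=
  ∃ s ∈ S, r < s ∧ r < star s

/-- A star of separations: a set of nondegenerate oriented separations pointing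
towards each other. -/
def IsStarSet (star : D → D) (σ : Set D) : Prop :=
  (∀ s ∈ σ, star s ≠ s) ∧ ∀ r ∈ σ, ∀ s ∈ σ, r ≠ s → r ≤ star s

/-- An orientation of (the unoriented separations underlying) `S`: it contains, for every
`s ∈ S`, exactly one of `s`, `s*`. -/
def IsOrientation (star : D → D) (S : Set D) (O : Set D) : Prop :=
  O ⊆ S ∧ (∀ s ∈ S, s ∈ O ∨ star s ∈ O) ∧ ∀ s ∈ O, star s ∈ O → star s = s

/-- `O` avoids `F` if no subset of `O` lies in `F`. -/
def Avoids (O : Set D) (F : Set (Set D)) : Prop := ∀ σ ∈ F, ¬σ ⊆ O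

/-- `O` is consistent: no two of its elements that are orientations of distinct separations
point away from each other. -/
def Consistent (star : D → D) (O : Set D) : Prop :=
  ∀ r s : D, r < s → star r ∈ O → s ∈ O → r = star s

/-- An `F`-tangle of `S`: a consistent orientation of `S` avoiding `F`. -/
def FTangle (star : D → D) (S : Set D) (F : Set (Set D)) (O : Set D) : Prop :=
  IsOrientation star S O ∧ Consistent star O ∧ Avoids O F

/-- An `S`-tree: a (finite) tree `T` together with `α` mapping its oriented edges to `S`,
commuting with the involutions. -/
def IsSTree (star : D → D) (S : Set D) (T : SimpleGraph V) (α : V → V → D) : Prop :=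
  T.Connected ∧ T.IsAcyclic ∧ (∀ x y : V, T.Adj x y → α x y ∈ S) ∧
    ∀ x y : V, T.Adj x y → α y x = star (α x y)

/-- The star `α(F→_t)` associated with a node `t`. -/
def starAt (T : SimpleGraph V) (α : V → V → D) (t : V) : Set D :=
  {d | ∃ x : V, T.Adj x t ∧ α x t = d}

/-- The `S`-tree `(T, α)` is over `F`. -/
def IsOver (T : SimpleGraph V) (α : V → V → D) (F : Set (Set D)) : Prop :=
  ∀ t : V, starAt T α t ∈ F

/-- `x` is a leaf of `T`. -/
def IsLeaf (T : SimpleGraph V) (x : V) : Prop := ∃! y : V, T.Adj x y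

/-- The natural strict partial order on oriented edges of a tree: `(x,y) < (u,v)` iff the
edges are distinct and the unique `{x,y}`–`{u,v}` path joins `y` to `u` (equivalently,
there is a path from `y` to `u` avoiding `x` and `v`). -/
def edgeLT (T : SimpleGraph V) (e f : V × V) : Prop :=
  ¬(e.1 = f.1 ∧ e.2 = f.2) ∧ ¬(e.1 = f.2 ∧ e.2 = f.1) ∧
    ∃ p : T.Walk e.2 f.1, p.IsPath ∧ e.1 ∉ p.support ∧ f.2 ∉ p.support

/-- The natural partial order on oriented edges of a tree. -/
def edgeLE (T : SimpleGraph V) (e f : V × V) : Prop := e = f ∨ edgeLT T e f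

/-- `(T, α)` is order-respecting. -/
def OrderRespecting (T : SimpleGraph V) (α : V → V → D) : Prop :=
  ∀ e f : V × V, T.Adj e.1 e.2 → T.Adj f.1 f.2 → edgeLE T e f →
    α e.1 e.2 ≤ α f.1 f.2

/-- `(T, α)` is irredundant. -/
def Irredundant (T : SimpleGraph V) (α : V → V → D) : Prop :=
  ∀ t t' t'' : V, T.Adj t' t → T.Adj t'' t → t' ≠ t'' → α t' t ≠ α t'' t

/-- `(T, α)` is tight: every associated star is antisymmetric. -/
def Tight (star : D → D) (T : SimpleGraph V) (α : V → V → D) : Prop :=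
  ∀ t : V, ∀ d ∈ starAt T α t, star d ≠ d → star d ∉ starAt T α t

/-- `(T, α)` is essential: irredundant, tight, and no `α(e)` is trivial in `S`. -/
def Essential (star : D → D) (S : Set D) (T : SimpleGraph V) (α : V → V → D) : Prop :=
  Irredundant T α ∧ Tight star T α ∧ ∀ x y : V, T.Adj x y → ¬TrivialIn star S (α x y)

/-- The essential core `F' = {σ \ S⁻ : σ ∈ F}` of `F`, where `S⁻` is the set of separations
trivial in `S`. -/
def essentialCore (star : D → D) (S : Set D) (F : Set (Set D)) : Set (Set D) :=
  (fun σ => σ \ {r : D | TrivialIn star S r}) '' F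

/-- `T'` (a tree on the vertex set `V' ⊆ V`) is a minor of the tree `T`: it is obtained
from a subtree of `T` (the union of the branch sets) by contracting the branch sets. -/
def TreeMinor (T : SimpleGraph V) (V' : Set V) (T' : SimpleGraph V') : Prop :=
  ∃ B : V' → Set V,
    (∀ a : V', (a : V) ∈ B a) ∧
    (∀ a b : V', a ≠ b → Disjoint (B a) (B b)) ∧
    (∀ a : V', (T.induce (B a)).Connected) ∧
    ∀ a b : V', a ≠ b → (T'.Adj a b ↔ ∃ u ∈ B a, ∃ v ∈ B b, T.Adj u v)

/-- `F` forces `s` if `{s*} ∈ F`. -/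
def Forces (star : D → D) (F : Set (Set D)) (s : D) : Prop :=
  ({star s} : Set D) ∈ F

/-- `F` is standard for `S`: it forces every separation trivial in `S`. -/
def StandardFor (star : D → D) (S : Set D) (F : Set (Set D)) : Prop :=
  ∀ r ∈ S, TrivialIn star S r → Forces star F r

section UniverseOfSeparations

variable {U : Type*} [Lattice U]

/-- `s0` emulates `r` in `S`. -/
def EmulatesIn (star : U → U) (S : Set U) (r s0 : U) : Prop :=
  r ≤ s0 ∧ ∀ s ∈ S, s ≠ star r → r ≤ s → s ⊔ s0 ∈ S

/-- The shifting map `f↓(r)(s0)`: it sends each `s ≥ r` with `s ≠ r*` to `s ⊔ s0`, and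
the inverse `s*` of such an `s` to `(s ⊔ s0)*`. -/
noncomputable def shiftFun (star : U → U) (r s0 t : U) : U :=
  if r ≤ t ∧ t ≠ star r then t ⊔ s0 else star (star t ⊔ s0)

/-- `S→_{≥ r}`: the set of orientations of separations in `S` having an orientation `≥ r`. -/
def SgeR (star : U → U) (S : Set U) (r : U) : Set U :=
  {s ∈ S | r ≤ s ∨ r ≤ star s}

/-- `s0` emulates `r` in `S` for `F`. -/
def EmulatesFor (star : U → U) (S : Set U) (F : Set (Set U)) (r s0 : U) : Prop :=
  EmulatesIn star S r s0 ∧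
    ∀ σ ∈ F, σ ⊆ SgeR star S r \ {star r} → (∃ s ∈ σ, r ≤ s) →
      shiftFun star r s0 '' σ ∈ F

/-- `S` is `F`-separable. -/
def FSeparable (star : U → U) (S : Set U) (F : Set (Set U)) : Prop :=
  ∀ r ∈ S, ∀ r' ∈ S,
    ¬TrivialIn star S r → ¬TrivialIn star S r' →
    star r ≠ r → star r' ≠ r' →
    ¬Forces star F r → ¬Forces star F r' → r ≤ r' →
    ∃ s0 ∈ S, EmulatesFor star S F r s0 ∧ EmulatesFor star S F r' (star s0)

/-- The shift `α_{x,s0}` of `α` in an `S`-tree rooted at the leaf `x` (with unique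
neighbour `y`): edges `e ≥ e_x→ = (x,y)` are mapped to `α(e) ⊔ s0`, their reversals
to `(α(e) ⊔ s0)*`. -/
noncomputable def shiftAlpha (star : U → U) (T : SimpleGraph V)
    (x y : V) (s0 : U) (α : V → V → U) (a b : V) : U :=
  if edgeLE T (x, y) (a, b) then α a b ⊔ s0 else star (α b a ⊔ s0)

end UniverseOfSeparations

end Defs

/-- Every separation trivial in `S` lies in each consistent orientation of `S`. -/
lemma trivial_mem_of_consistent {D : Type*} [PartialOrder D] (star : D → D)
    (hinv : ∀ s : D, star (star s) = s) (O : Set D)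
    (hO : IsOrientation star Set.univ O) (hC : Consistent star O)
    {r : D} (hr : TrivialIn star Set.univ r) : r ∈ O := by
  obtain ⟨s, -, hrs, hrs'⟩ := hr
  have hnot : star r ∉ O := by
    intro hmem
    rcases hO.2.1 s (Set.mem_univ s) with hs | hs
    · exact absurd (hC r s hrs hmem hs ▸ hrs') (lt_irrefl _)
    · have := hC r (star s) hrs' hmem hs
      rw [this, hinv] at hrs
      exact lt_irrefl _ hrs
  rcases hO.2.1 r (Set.mem_univ r) with h | h
  · exact h
  · exact absurd h hnot

/-- The `F'`-tangles of `S` are precisely its `F`-tangles, where `F'` is the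
essential core of `F`. -/
theorem essentialCore_tangles {D : Type*} [PartialOrder D] [Fintype D] (star : D → D)
    (hinv : ∀ s : D, star (star s) = s)
    (hrev : ∀ r s : D, r ≤ s ↔ star s ≤ star r)
    (F : Set (Set D)) (hF : ∀ σ ∈ F, IsStarSet star σ) (O : Set D) :
    FTangle star Set.univ (essentialCore star Set.univ F) O ↔
      FTangle star Set.univ F O := by
  constructor
  · rintro ⟨hO, hC, hA⟩
    refine ⟨hO, hC, fun σ hσ hsub => ?_⟩
    exact hA _ ⟨σ, hσ, rfl⟩ (fun d hd => hsub hd.1)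
  · rintro ⟨hO, hC, hA⟩
    refine ⟨hO, hC, ?_⟩
    rintro τ ⟨σ, hσ, rfl⟩ hsub
    refine hA σ hσ (fun d hd => ?_)
    by_cases htriv : TrivialIn star Set.univ d
    · exact trivial_mem_of_consistent star hinv O hO hC htriv
    · exact hsub ⟨hd, htriv⟩

end SepDuality
end

section
/- Let (S→, ≤, *) be a finite separation system, F ⊆ 2^{S→} a family of stars that is standard for S→, and F' the essential core of F. Then from every essential S-tree (T', α') over F' one can obtain an S-tree (T, α) over F by adding leaves: there exists an S-tree (T, α) over F such that T' is the subtree of T induced by the nodes of T', every node of T not in T' is a leaf of T joined to a node of T', and α restricted to E→(T') equals α'. -/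
open Classical

namespace SepDuality

section Aux

variable {V₀ : Type*} {V : Type*}

/-- Pull back a walk whose support lies in the range of `f`. -/
lemma exists_pullback_walk {T' : SimpleGraph V₀} {T : SimpleGraph V}
    (f : V₀ → V) (hinj : Function.Injective f)
    (hadj : ∀ a b : V₀, T.Adj (f a) (f b) → T'.Adj a b) :
    ∀ (n : ℕ) {u v : V₀} (p : T.Walk (f u) (f v)), p.length = n →
      (∀ w ∈ p.support, ∃ a, w = f a) →
      ∃ q : T'.Walk u v, p.support = q.support.map f ∧
        p.edges = q.edges.map (Sym2.map f) := by
  intro n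
  induction n with
  | zero =>
    intro u v p hl hs
    have huv : u = v := hinj (SimpleGraph.Walk.eq_of_length_eq_zero hl)
    subst huv
    have hnil : p.Nil := SimpleGraph.Walk.nil_iff_length_eq.mpr hl
    have hp : p = SimpleGraph.Walk.nil := hnil.eq_nil
    subst hp
    exact ⟨SimpleGraph.Walk.nil, by simp, by simp⟩
  | succ n ih =>
    intro u v p hl hs
    have hnn : ¬ p.Nil := by
      rw [SimpleGraph.Walk.nil_iff_length_eq, hl]; simp
    obtain ⟨x, h1, q, rfl⟩ := SimpleGraph.Walk.not_nil_iff.mp hnn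
    obtain ⟨a, rfl⟩ := hs x (by simp)
    obtain ⟨q', hsup, hedg⟩ := ih q (by simpa using hl)
      (fun w hw => hs w (by simp [hw]))
    exact ⟨SimpleGraph.Walk.cons (hadj _ _ h1) q', by simp [hsup], by simp [hedg]⟩

/-- Acyclicity pulls back along injections whose range contains the support
of every cycle. -/
lemma acyclic_of_pullback {T' : SimpleGraph V₀} {T : SimpleGraph V}
    (f : V₀ → V) (hinj : Function.Injective f)
    (hadj : ∀ a b : V₀, T.Adj (f a) (f b) → T'.Adj a b)
    (hT'ac : T'.IsAcyclic)
    (hsup : ∀ (v : V) (p : T.Walk v v), p.IsCycle → ∀ w ∈ p.support, ∃ a, w = f a) :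
    T.IsAcyclic := by
  intro v p hp
  obtain ⟨u, rfl⟩ := hsup v p hp v p.start_mem_support
  obtain ⟨q, hqs, hqe⟩ := exists_pullback_walk f hinj hadj p.length p rfl (hsup _ p hp)
  have hlen : q.length = p.length := by
    rw [← SimpleGraph.Walk.length_edges, ← SimpleGraph.Walk.length_edges, hqe,
      List.length_map]
  have hq : q.IsCycle := by
    refine ⟨⟨⟨?_⟩, ?_⟩, ?_⟩
    · have := hp.edges_nodup
      rw [hqe] at this
      exact this.of_map _
    · intro h
      have h3 := hp.three_le_length
      rw [← hlen, h] at h3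
      simp at h3
    · have := hp.support_nodup
      rw [hqs] at this
      have htail : (q.support.map f).tail = q.support.tail.map f := by
        cases q.support <;> simp
      rw [htail] at this
      exact this.of_map _
  exact hT'ac q hq

end Aux

/-- If `F` is standard for `S`, then from every essential `S`-tree over the essential
core `F'` of `F` one can obtain an `S`-tree over `F` by adding leaves. -/
theorem STree_of_essential_STree {D : Type*} [PartialOrder D] [Fintype D] (star : D → D)
    (hinv : ∀ s : D, star (star s) = s)
    (hrev : ∀ r s : D, r ≤ s ↔ star s ≤ star r)
    (F : Set (Set D)) (hF : ∀ σ ∈ F, IsStarSet star σ)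
    (hstd : StandardFor star Set.univ F)
    {V₀ : Type} [Fintype V₀] (T' : SimpleGraph V₀) (α' : V₀ → V₀ → D)
    (hT' : IsSTree star Set.univ T' α')
    (hess : Essential star Set.univ T' α')
    (hover : IsOver T' α' (essentialCore star Set.univ F)) :
    ∃ (V : Type) (_ : Fintype V) (T : SimpleGraph V) (α : V → V → D) (ι : V₀ → V),
      Function.Injective ι ∧
      IsSTree star Set.univ T α ∧ IsOver T α F ∧
      (∀ a b : V₀, T.Adj (ι a) (ι b) ↔ T'.Adj a b) ∧
      (∀ a b : V₀, T'.Adj a b → α (ι a) (ι b) = α' a b) ∧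
      (∀ v : V, v ∉ Set.range ι →
        ∃ a : V₀, T.Adj v (ι a) ∧ ∀ w : V, T.Adj v w → w = ι a) := by
  classical
  -- choose the stars σ t ∈ F whose essential cores are the stars of (T', α')
  have hσ' : ∀ t : V₀, ∃ σ ∈ F,
      σ \ {r : D | TrivialIn star Set.univ r} = starAt T' α' t := fun t => hover t
  choose σ hσF hσeq using hσ'
  -- enumerate the trivial elements of each σ t
  have henum : ∀ t : V₀, ∃ n : ℕ, ∃ e : Fin n → D, Function.Injective e ∧
      Set.range e = {d : D | d ∈ σ t ∧ TrivialIn star Set.univ d} := by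
    intro t
    haveI : Fintype {d : D // d ∈ σ t ∧ TrivialIn star Set.univ d} := by
      apply Subtype.fintype
    refine ⟨Fintype.card {d : D // d ∈ σ t ∧ TrivialIn star Set.univ d},
      fun i => ((Fintype.equivFin {d : D // d ∈ σ t ∧ TrivialIn star Set.univ d}).symm i : D),
      Subtype.val_injective.comp (Equiv.injective _), ?_⟩
    ext d
    constructor
    · rintro ⟨i, rfl⟩
      exact ((Fintype.equivFin {d : D // d ∈ σ t ∧ TrivialIn star Set.univ d}).symm i).2
    · intro hd
      exact ⟨Fintype.equivFin {d : D // d ∈ σ t ∧ TrivialIn star Set.univ d} ⟨d, hd⟩, by simp⟩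
  choose n e he hrange using henum
  set V : Type := V₀ ⊕ ((t : V₀) × Fin (n t)) with hVdef
  -- the enlarged tree
  set Adjn : V → V → Prop := fun x y =>
    (∃ a b : V₀, x = Sum.inl a ∧ y = Sum.inl b ∧ T'.Adj a b) ∨
    (∃ (t : V₀) (i : Fin (n t)), x = Sum.inl t ∧ y = Sum.inr ⟨t, i⟩) ∨
    (∃ (t : V₀) (i : Fin (n t)), x = Sum.inr ⟨t, i⟩ ∧ y = Sum.inl t) with hAdjdef
  have hsymm : ∀ x y : V, Adjn x y → Adjn y x := by
    rintro x y (⟨a, b, rfl, rfl, hab⟩ | ⟨t, i, rfl, rfl⟩ | ⟨t, i, rfl, rfl⟩)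
    · exact Or.inl ⟨b, a, rfl, rfl, hab.symm⟩
    · exact Or.inr (Or.inr ⟨t, i, rfl, rfl⟩)
    · exact Or.inr (Or.inl ⟨t, i, rfl, rfl⟩)
  have hirrefl : ∀ x : V, ¬ Adjn x x := by
    rintro x (⟨a, b, rfl, hab, h⟩ | ⟨t, i, rfl, h⟩ | ⟨t, i, rfl, h⟩)
    · rw [Sum.inl.injEq] at hab; subst hab; exact T'.irrefl h
    · exact absurd h (by simp)
    · exact absurd h (by simp)
  set T : SimpleGraph V := ⟨Adjn, ⟨fun x y h => hsymm x y h⟩, ⟨fun x h => hirrefl x h⟩⟩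
    with hTdef
  set αn : V → V → D := fun x y =>
    Sum.elim (fun a => Sum.elim (α' a) (fun q => star (e q.1 q.2)) y)
      (fun p => e p.1 p.2) x with hαdef
  have hadj_inl : ∀ a b : V₀, T.Adj (Sum.inl a) (Sum.inl b) ↔ T'.Adj a b := by
    intro a b
    constructor
    · rintro (⟨a', b', ha, hb, hab⟩ | ⟨t, i, h1, h2⟩ | ⟨t, i, h1, h2⟩)
      · rw [Sum.inl.injEq] at ha hb; subst ha; subst hb; exact hab
      · exact absurd h2 (by simp)
      · exact absurd h1 (by simp)
    · intro h; exact Or.inl ⟨a, b, rfl, rfl, h⟩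
  -- labels of the new leaves are trivial separations in σ t
  have hlab : ∀ (t : V₀) (i : Fin (n t)),
      e t i ∈ σ t ∧ TrivialIn star Set.univ (e t i) := by
    intro t i
    have : e t i ∈ Set.range (e t) := ⟨i, rfl⟩
    rw [hrange t] at this
    exact this
  refine ⟨V, inferInstance, T, αn, Sum.inl, Sum.inl_injective, ?_, ?_, hadj_inl,
    fun a b _ => rfl, ?_⟩
  · -- IsSTree
    refine ⟨?_, ?_, fun x y _ => Set.mem_univ _, ?_⟩
    · -- connected
      obtain ⟨t₀⟩ : Nonempty V₀ := hT'.1.nonempty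
      have hreach : ∀ x : V, ∃ a : V₀, T.Reachable (Sum.inl a) x := by
        rintro (a | ⟨t, i⟩)
        · exact ⟨a, SimpleGraph.Reachable.refl _⟩
        · exact ⟨t, SimpleGraph.Adj.reachable
            (Or.inr (Or.inl ⟨t, i, rfl, rfl⟩))⟩
      rw [SimpleGraph.connected_iff]
      refine ⟨?_, ⟨Sum.inl t₀⟩⟩
      intro x y
      obtain ⟨a, hx⟩ := hreach x
      obtain ⟨b, hy⟩ := hreach y
      have hab : T'.Reachable a b := hT'.1.preconnected a b
      have hab' : T.Reachable (Sum.inl a) (Sum.inl b) := by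
        obtain ⟨w⟩ := hab
        exact ⟨w.map ⟨Sum.inl, fun {a b} h => (hadj_inl a b).mpr h⟩⟩
      exact hx.symm.trans (hab'.trans hy)
    · -- acyclic
      refine acyclic_of_pullback Sum.inl Sum.inl_injective
        (fun a b h => (hadj_inl a b).mp h) hT'.2.1 ?_
      intro v p hp w hw
      by_contra hcon
      push_neg at hcon
      obtain ⟨pr, rfl⟩ : ∃ pr, w = Sum.inr pr := by
        cases w with
        | inl a => exact absurd rfl (hcon a)
        | inr pr => exact ⟨pr, rfl⟩
      -- rotate the cycle to start at the leaf
      have hp' := hp.rotate hw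
      set p' := p.rotate _ hw with hp'def
      obtain ⟨x, h1, q, hq⟩ := SimpleGraph.Walk.not_nil_iff.mp hp'.not_nil
      have hx : x = Sum.inl pr.1 := by
        rcases h1 with (⟨a, b, ha, hb, hab⟩ | ⟨t, i, h1', h2'⟩ | ⟨t, i, h1', h2'⟩)
        · exact absurd ha (by simp)
        · exact absurd h1' (by simp)
        · rw [Sum.inr.injEq] at h1'
          subst h1'
          rw [h2']
      subst hx
      have hqne : (Sum.inr pr : V) ≠ Sum.inl pr.1 := by simp
      obtain ⟨y, h2, q2, hq2⟩ := SimpleGraph.Walk.exists_eq_cons_of_ne hqne q.reverse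
      have hy : y = Sum.inl pr.1 := by
        rcases h2 with (⟨a, b, ha, hb, hab⟩ | ⟨t, i, h1', h2'⟩ | ⟨t, i, h1', h2'⟩)
        · exact absurd ha (by simp)
        · exact absurd h1' (by simp)
        · rw [Sum.inr.injEq] at h1'
          subst h1'
          rw [h2']
      subst hy
      have hnodup := hp'.edges_nodup
      rw [hq, SimpleGraph.Walk.edges_cons] at hnodup
      have hmem : s(Sum.inr pr, (Sum.inl pr.1 : V)) ∈ q.edges := by
        have : q.reverse.edges = s(Sum.inr pr, (Sum.inl pr.1 : V)) :: q2.edges := by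
          rw [hq2, SimpleGraph.Walk.edges_cons]
        have h' : s(Sum.inr pr, (Sum.inl pr.1 : V)) ∈ q.reverse.edges := by
          rw [this]; exact List.mem_cons_self
        rwa [SimpleGraph.Walk.edges_reverse, List.mem_reverse] at h'
      exact (List.nodup_cons.mp hnodup).1 hmem
    · -- α commutes with star on edges
      rintro x y (⟨a, b, rfl, rfl, hab⟩ | ⟨t, i, rfl, rfl⟩ | ⟨t, i, rfl, rfl⟩)
      · exact hT'.2.2.2 a b hab
      · show e t i = star (star (e t i))
        rw [hinv]
      · rfl
  · -- IsOver F
    rintro (t | ⟨t, i⟩)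
    · have hstar : starAt T αn (Sum.inl t) = σ t := by
        ext d
        constructor
        · rintro ⟨x, hadj, hd⟩
          rcases hadj with (⟨a, b, ha, hb, hab⟩ | ⟨t', i', h1', h2'⟩ |
              ⟨t', i', h1', h2'⟩)
          · rw [Sum.inl.injEq] at hb; subst hb; subst ha
            have : d ∈ starAt T' α' t := ⟨a, hab, hd⟩
            rw [← hσeq t] at this
            exact this.1
          · exact absurd h2' (by simp)
          · subst h1'
            have ht : t = t' := Sum.inl_injective h2'
            subst ht
            have hd' : e t i' = d := hd
            rw [← hd']
            exact (hlab t i').1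
        · intro hd
          by_cases htriv : TrivialIn star Set.univ d
          · have : d ∈ Set.range (e t) := by
              rw [hrange t]; exact ⟨hd, htriv⟩
            obtain ⟨i', hi'⟩ := this
            exact ⟨Sum.inr ⟨t, i'⟩, Or.inr (Or.inr ⟨t, i', rfl, rfl⟩), hi'⟩
          · have : d ∈ starAt T' α' t := by
              rw [← hσeq t]; exact ⟨hd, htriv⟩
            obtain ⟨b, hb, hbd⟩ := this
            exact ⟨Sum.inl b, Or.inl ⟨b, t, rfl, rfl, hb⟩, hbd⟩
      rw [hstar]
      exact hσF t
    · have hstar : starAt T αn (Sum.inr ⟨t, i⟩) = {star (e t i)} := by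
        ext d
        constructor
        · rintro ⟨x, hadj, hd⟩
          rcases hadj with (⟨a, b, ha, hb, hab⟩ | ⟨t', i', h1', h2'⟩ |
              ⟨t', i', h1', h2'⟩)
          · exact absurd hb (by simp)
          · subst h1'
            rw [Sum.inr.injEq, Sigma.mk.inj_iff] at h2'
            obtain ⟨rfl, hii⟩ := h2'
            have hii' : i = i' := heq_iff_eq.mp hii
            subst hii'
            have hd' : star (e t i) = d := hd
            rw [Set.mem_singleton_iff, ← hd']
          · exact absurd h2' (by simp)
        · rintro rfl
          exact ⟨Sum.inl t, Or.inr (Or.inl ⟨t, i, rfl, rfl⟩), rfl⟩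
      rw [hstar]
      exact hstd (e t i) (Set.mem_univ _) (hlab t i).2
  · -- new vertices are leaves attached to old nodes
    rintro (a | ⟨t, i⟩) hv
    · exact absurd ⟨a, rfl⟩ hv
    · refine ⟨t, Or.inr (Or.inr ⟨t, i, rfl, rfl⟩), ?_⟩
      rintro w (⟨a, b, ha, hb, hab⟩ | ⟨t', i', h1', h2'⟩ | ⟨t', i', h1', h2'⟩)
      · exact absurd ha (by simp)
      · exact absurd h1' (by simp)
      · rw [Sum.inr.injEq, Sigma.mk.inj_iff] at h1'
        rw [h2', h1'.1]

end SepDuality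
end

section
/- Every irredundant S-tree (T, α) over a family of stars is order-respecting. In particular, the image α(E→(T)) is a nested set of separations in S→. -/
open Classical

namespace SepDuality

section AuxLemmas

variable {D : Type*} [PartialOrder D] {V : Type*}

/-- Key lemma: if there is a path from `y` to `u` avoiding `x` and `v`, then
`α x y ≤ α u v`. -/
lemma key_lemma (star : D → D) (T : SimpleGraph V) (α : V → V → D)
    (hsym : ∀ x y : V, T.Adj x y → α y x = star (α x y))
    (hstars : ∀ t : V, IsStarSet star (starAt T α t))
    (hirr : Irredundant T α) :
    ∀ {y u : V} (p : T.Walk y u), p.IsPath → ∀ x v : V, T.Adj x y → T.Adj u v →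
      x ∉ p.support → v ∉ p.support → (x = v → y ≠ u) → α x y ≤ α u v := by
  intro y u p
  induction p with
  | nil =>
    rename_i a
    intro _ x v hxy huv _ _ hside
    have hxv : x ≠ v := fun h => hside h rfl
    have h1 : α x a ∈ starAt T α a := ⟨x, hxy, rfl⟩
    have h2 : α v a ∈ starAt T α a := ⟨v, huv.symm, rfl⟩
    have hne : α x a ≠ α v a := hirr a x v hxy huv.symm hxv
    have hle := (hstars a).2 _ h1 _ h2 hne
    rw [hsym v a huv.symm]
    exact hle
  | cons h q ih =>
    rename_i a b c
    intro hp x v hxy huv hx hv _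
    rw [SimpleGraph.Walk.cons_isPath_iff] at hp
    obtain ⟨hq, haq⟩ := hp
    rw [SimpleGraph.Walk.support_cons, List.mem_cons] at hx hv
    push_neg at hx hv
    obtain ⟨hxa, hxq⟩ := hx
    obtain ⟨hva, hvq⟩ := hv
    have hxb : x ≠ b := fun hh => hxq (hh ▸ q.start_mem_support)
    have step : α x a ≤ α a b := by
      have h1 : α x a ∈ starAt T α a := ⟨x, hxy, rfl⟩
      have h2 : α b a ∈ starAt T α a := ⟨b, h.symm, rfl⟩
      have hne : α x a ≠ α b a := hirr a x b hxy h.symm hxb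
      have hle := (hstars a).2 _ h1 _ h2 hne
      rw [hsym b a h.symm]
      exact hle
    exact le_trans step
      (ih hq a v h huv haq hvq (fun hh => absurd hh.symm hva))

/-- Decomposition: if a path from `y` to `u` passes through a neighbour `x` of `y`,
then its tail is a path from `x` to `u` avoiding `y`. -/
lemma decomp_lemma (T : SimpleGraph V) (hac : T.IsAcyclic) {y u x : V}
    (p : T.Walk y u) (hp : p.IsPath) (hx : x ∈ p.support) (hyx : T.Adj y x) :
    ∃ q : T.Walk x u, q.IsPath ∧ y ∉ q.support ∧ ∀ z ∈ q.support, z ∈ p.support := by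
  classical
  have htake : p.takeUntil x hx = SimpleGraph.Walk.cons hyx SimpleGraph.Walk.nil := by
    have h1 : (⟨p.takeUntil x hx, hp.takeUntil hx⟩ : T.Path y x) =
        SimpleGraph.Path.singleton hyx := hac.path_unique _ _
    simpa [SimpleGraph.Path.singleton] using congrArg Subtype.val h1
  have hspec := p.take_spec hx
  rw [htake] at hspec
  simp only [SimpleGraph.Walk.cons_append, SimpleGraph.Walk.nil_append] at hspec
  have hp' : (SimpleGraph.Walk.cons hyx (p.dropUntil x hx)).IsPath := by
    rw [hspec]; exact hp
  rw [SimpleGraph.Walk.cons_isPath_iff] at hp'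
  exact ⟨p.dropUntil x hx, hp'.1, hp'.2,
    fun z hz => SimpleGraph.Walk.support_dropUntil_subset p hx hz⟩

end AuxLemmas

/-- Every irredundant `S`-tree over stars is order-respecting; in particular the image
`α(E→(T))` is a nested set of separations. -/
theorem irredundant_orderRespecting {D : Type*} [PartialOrder D] [Fintype D] (star : D → D)
    (hinv : ∀ s : D, star (star s) = s)
    (hrev : ∀ r s : D, r ≤ s ↔ star s ≤ star r)
    {V : Type} [Fintype V] (T : SimpleGraph V) (α : V → V → D)
    (hT : IsSTree star Set.univ T α)
    (hstars : ∀ t : V, IsStarSet star (starAt T α t))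
    (hirr : Irredundant T α) :
    OrderRespecting T α ∧
      ∀ d d' : D, (∃ x y : V, T.Adj x y ∧ α x y = d) →
        (∃ x y : V, T.Adj x y ∧ α x y = d') →
        (d ≤ d' ∨ d' ≤ d ∨ d ≤ star d' ∨ star d' ≤ d) := by
  obtain ⟨hconn, hac, -, hsym'⟩ := hT
  have hsym : ∀ x y : V, T.Adj x y → α y x = star (α x y) := hsym'
  constructor
  · intro e f he hf hef
    rcases hef with rfl | ⟨h1, h2, p, hp, he1, hf2⟩
    · exact le_rfl
    · exact key_lemma star T α hsym hstars hirr p hp e.1 f.2 he hf he1 hf2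
        (fun hxv hyu => h2 ⟨hxv, hyu⟩)
  · rintro d d' ⟨x, y, hxy, rfl⟩ ⟨u, v2, huv, rfl⟩
    obtain ⟨w0⟩ := hconn.preconnected y u
    -- Step 1: orient the first edge so that the path avoids its tail.
    obtain ⟨a, b, hab, q, hq, haq, hda⟩ :
        ∃ a b, T.Adj a b ∧ ∃ q : T.Walk b u, q.IsPath ∧ a ∉ q.support ∧
          (α a b = α x y ∨ star (α a b) = α x y) := by
      by_cases hx : x ∈ (w0.toPath : T.Walk y u).support
      · obtain ⟨q, hqp, hy, -⟩ := decomp_lemma T hac _ w0.toPath.2 hx hxy.symm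
        exact ⟨y, x, hxy.symm, q, hqp, hy, Or.inr (by rw [hsym x y hxy, hinv])⟩
      · exact ⟨x, y, hxy, w0.toPath, w0.toPath.2, hx, Or.inl rfl⟩
    -- Step 2: orient the second edge similarly.
    obtain ⟨c, w2, hcw, P, hP, haP, hwP, hdc⟩ :
        ∃ c w2, T.Adj c w2 ∧ ∃ P : T.Walk b c, P.IsPath ∧ a ∉ P.support ∧
          w2 ∉ P.support ∧ (α c w2 = α u v2 ∨ star (α c w2) = α u v2) := by
      by_cases hv : v2 ∈ q.support
      · have hv' : v2 ∈ q.reverse.support := by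
          rw [SimpleGraph.Walk.support_reverse]; simpa using hv
        obtain ⟨r, hr, hur, hsub⟩ := decomp_lemma T hac q.reverse hq.reverse hv' huv
        refine ⟨v2, u, huv.symm, r.reverse, hr.reverse, ?_, ?_,
          Or.inr (by rw [hsym u v2 huv, hinv])⟩
        · rw [SimpleGraph.Walk.support_reverse, List.mem_reverse]
          intro har
          have := hsub a har
          rw [SimpleGraph.Walk.support_reverse, List.mem_reverse] at this
          exact haq this
        · rw [SimpleGraph.Walk.support_reverse, List.mem_reverse]
          exact hur
      · exact ⟨u, v2, huv, q, hq, haq, hv, Or.inl rfl⟩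
    by_cases hside : a = w2 ∧ b = c
    · obtain ⟨rfl, rfl⟩ := hside
      have hba : α b a = star (α a b) := hsym a b hab
      rcases hda with h1 | h1 <;> rcases hdc with h2 | h2
      · refine Or.inr (Or.inr (Or.inl (le_of_eq ?_)))
        rw [← h2, hba, hinv, h1]
      · refine Or.inl (le_of_eq ?_)
        rw [← h2, hba, hinv, h1]
      · refine Or.inr (Or.inl (le_of_eq ?_))
        rw [← h1, ← h2, hba]
      · refine Or.inr (Or.inr (Or.inr (le_of_eq ?_)))
        rw [← h2, hba, hinv, h1]
    · have hkey : α a b ≤ α c w2 :=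
        key_lemma star T α hsym hstars hirr P hP a w2 hab hcw haP hwP
          (fun hh1 hh2 => hside ⟨hh1, hh2⟩)
      rcases hda with h1 | h1 <;> rcases hdc with h2 | h2
      · exact Or.inl (by rw [← h1, ← h2]; exact hkey)
      · refine Or.inr (Or.inr (Or.inl ?_))
        have h2' : α c w2 = star (α u v2) := by rw [← h2, hinv]
        rw [← h1, ← h2']; exact hkey
      · refine Or.inr (Or.inr (Or.inr ?_))
        have h1' : α a b = star (α x y) := by rw [← h1, hinv]
        rw [h1', h2] at hkey
        have := (hrev _ _).mp hkey
        rwa [hinv] at this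
      · refine Or.inr (Or.inl ?_)
        have h1' : α a b = star (α x y) := by rw [← h1, hinv]
        have h2' : α c w2 = star (α u v2) := by rw [← h2, hinv]
        rw [h1', h2'] at hkey
        exact (hrev _ _).mpr hkey

end SepDuality
end

section
/- Let (T, α) be an irredundant S-tree over a family F of stars. Let e, f be distinct edges of T with orientations e→ < f→ (in the natural ordering of E→(T)) such that α(e→) = α(f←) =: r, where f← is the reversal of f→. Then r is trivial in S→. In particular, T cannot have distinct leaves associated with the same star {r*} unless r is trivial in S→. -/
open Classical

namespace SepDuality

section Aux

variable {D : Type*} [PartialOrder D] {V : Type}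

lemma star_le_of_adj {star : D → D} {F : Set (Set D)}
    (hF : ∀ σ ∈ F, IsStarSet star σ)
    {T : SimpleGraph V} {α : V → V → D}
    (hover : IsOver T α F) (hirr : Irredundant T α)
    {t a b : V} (ha : T.Adj a t) (hb : T.Adj b t) (hab : a ≠ b) :
    α a t ≤ star (α b t) :=
  (hF _ (hover t)).2 _ ⟨a, ha, rfl⟩ _ ⟨b, hb, rfl⟩ (hirr t a b ha hb hab)

lemma not_mem_support_cons {T : SimpleGraph V} {a b c w : V} {h : T.Adj a b}
    {q : T.Walk b c} (hw : w ∉ (SimpleGraph.Walk.cons h q).support) :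
    w ∉ q.support := by
  rw [SimpleGraph.Walk.support_cons] at hw
  exact fun hm => hw (List.mem_cons_of_mem _ hm)

lemma ne_of_not_mem_support_cons {T : SimpleGraph V} {a b c w : V} {h : T.Adj a b}
    {q : T.Walk b c} (hw : w ∉ (SimpleGraph.Walk.cons h q).support) :
    w ≠ a := by
  rw [SimpleGraph.Walk.support_cons] at hw
  exact fun he => hw (he ▸ List.mem_cons_self)

lemma chain_le {star : D → D} (hinv : ∀ s : D, star (star s) = s)
    {F : Set (Set D)} (hF : ∀ σ ∈ F, IsStarSet star σ)
    {T : SimpleGraph V} {α : V → V → D}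
    (hsym : ∀ x y : V, T.Adj x y → α y x = star (α x y))
    (hover : IsOver T α F) (hirr : Irredundant T α) {v : V} :
    ∀ {a u : V} (q : T.Walk a u), T.Adj u v → q.IsPath → ∀ w : V, T.Adj w a →
      w ∉ q.support → v ∉ q.support → w ≠ v →
      α w a ≤ star (α v u) := by
  intro a u q
  induction q with
  | nil =>
    intro huv _ w hwa _ _ hwv
    exact star_le_of_adj hF hover hirr hwa huv.symm hwv
  | @cons y c u' h q ih =>
    intro huv hq w hwa hws hvs hwv
    have hqp : q.IsPath := hq.of_cons
    have hys : y ∉ q.support := ((SimpleGraph.Walk.cons_isPath_iff h q).1 hq).2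
    have hvs' : v ∉ q.support := not_mem_support_cons hvs
    have hyv : y ≠ v := (ne_of_not_mem_support_cons hvs).symm
    have hwc : w ≠ c := fun hwc => (not_mem_support_cons hws) (hwc ▸ q.start_mem_support)
    have h1 : α w y ≤ star (α c y) := star_le_of_adj hF hover hirr hwa h.symm hwc
    have h2 : star (α c y) = α y c := by rw [hsym y c h, hinv]
    have h3 : α y c ≤ star (α v u') := ih huv hqp y h hys hvs' hyv
    exact le_trans (h2 ▸ h1) h3

lemma main_trivial {star : D → D} (hinv : ∀ s : D, star (star s) = s)
    (hrev : ∀ r s : D, r ≤ s ↔ star s ≤ star r)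
    {F : Set (Set D)} (hF : ∀ σ ∈ F, IsStarSet star σ)
    {T : SimpleGraph V} {α : V → V → D}
    (hsym : ∀ x y : V, T.Adj x y → α y x = star (α x y))
    (hover : IsOver T α F) (hirr : Irredundant T α) {v : V} {r : D} :
    ∀ {y u : V} (p : T.Walk y u), T.Adj u v → α v u = r → p.IsPath → ∀ x : V, T.Adj x y →
      x ∉ p.support → v ∉ p.support → ¬(x = u ∧ y = v) → ¬(x = v ∧ y = u) →
      α x y = r → TrivialIn star Set.univ r := by
  intro y u p
  induction p with
  | @nil y =>
    intro huv hvur _ x hx _ _ _ hxv hxyr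
    exact absurd (by rw [hxyr, hvur] : α x y = α v y)
      (hirr y x v hx huv.symm (fun hxv' => hxv ⟨hxv', rfl⟩))
  | @cons y c u' h q ih =>
    intro huv hvur hp x hx hxs hvs _ _ hxyr
    have hqp : q.IsPath := hp.of_cons
    have hyq : y ∉ q.support := ((SimpleGraph.Walk.cons_isPath_iff h q).1 hp).2
    have hvq : v ∉ q.support := not_mem_support_cons hvs
    have hyv : y ≠ v := (ne_of_not_mem_support_cons hvs).symm
    have hyu : y ≠ u' := fun hyu => hyq (hyu ▸ q.end_mem_support)
    have hxc : x ≠ c := fun hxc => (not_mem_support_cons hxs) (hxc ▸ q.start_mem_support)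
    have hne : α x y ≠ α c y := hirr y x c hx h.symm hxc
    have hle : r ≤ α y c := by
      have := star_le_of_adj hF hover hirr hx h.symm hxc
      rwa [hsym y c h, hinv, hxyr] at this
    by_cases hc : α y c = r
    · exact ih huv hvur hqp y h hyq hvq (fun h' => hyu h'.1) (fun h' => hyv h'.1) hc
    · refine ⟨α y c, Set.mem_univ _, lt_of_le_of_ne hle (Ne.symm hc), ?_⟩
      have hch : α y c ≤ star (α v u') :=
        chain_le hinv hF hsym hover hirr q huv hqp y h hyq hvq hyv
      rw [hvur] at hch
      have hle2 : r ≤ star (α y c) := by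
        have := (hrev (α y c) (star r)).1 hch
        rwa [hinv] at this
      refine lt_of_le_of_ne hle2 (fun heq => ?_)
      rw [← hsym y c h] at heq
      exact hne (hxyr.trans heq)

lemma leaf_not_mem {T : SimpleGraph V} {ℓ n : V}
    (hl : ∀ z : V, T.Adj ℓ z → z = n) :
    ∀ {a b : V} (p : T.Walk a b), p.IsPath → ℓ ≠ a → ℓ ≠ b → ℓ ∉ p.support := by
  intro a b p
  induction p with
  | @nil a => intro _ ha _ hm; exact ha ((SimpleGraph.Walk.mem_support_nil_iff).1 hm)
  | @cons a c b h q ih =>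
    intro hp ha hb hm
    rw [SimpleGraph.Walk.support_cons] at hm
    rcases List.mem_cons.1 hm with h1 | h2
    · exact ha h1
    · by_cases hc : ℓ = c
      · subst hc
        have haq : a ∉ q.support := ((SimpleGraph.Walk.cons_isPath_iff h q).1 hp).2
        have han : a = n := hl a h.symm
        cases q with
        | nil => exact hb rfl
        | @cons _ d _ h2' q2 =>
          have hdn : d = n := hl d h2'
          have : d ∈ (SimpleGraph.Walk.cons h2' q2).support := by
            rw [SimpleGraph.Walk.support_cons]
            exact List.mem_cons_of_mem _ q2.start_mem_support
          exact haq (by rw [han, ← hdn]; exact this)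
      · exact ih hp.of_cons hc hb h2

end Aux

/-- In an irredundant `S`-tree over a family `F` of stars, if distinct edges have
orientations `e→ < f→` with `α(e→) = α(f←) = r`, then `r` is trivial in `S→`.
In particular, distinct leaves cannot be associated with the same star `{r*}`
unless `r` is trivial. -/
theorem trivial_of_equal_labels {D : Type*} [PartialOrder D] [Fintype D] (star : D → D)
    (hinv : ∀ s : D, star (star s) = s)
    (hrev : ∀ r s : D, r ≤ s ↔ star s ≤ star r)
    (F : Set (Set D)) (hF : ∀ σ ∈ F, IsStarSet star σ)
    {V : Type} [Fintype V] (T : SimpleGraph V) (α : V → V → D)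
    (hT : IsSTree star Set.univ T α) (hover : IsOver T α F)
    (hirr : Irredundant T α)
    (x y u v : V) (hxy : T.Adj x y) (huv : T.Adj u v)
    (hlt : edgeLT T (x, y) (u, v)) (r : D)
    (h1 : α x y = r) (h2 : α v u = r) :
    TrivialIn star Set.univ r ∧
      ∀ (ℓ₁ ℓ₂ : V) (r' : D), IsLeaf T ℓ₁ → IsLeaf T ℓ₂ → ℓ₁ ≠ ℓ₂ →
        starAt T α ℓ₁ = {star r'} → starAt T α ℓ₂ = {star r'} →
        TrivialIn star Set.univ r' := by
  have hsym : ∀ a b : V, T.Adj a b → α b a = star (α a b) := hT.2.2.2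
  constructor
  · obtain ⟨hne1, hne2, p, hp, hxs, hvs⟩ := hlt
    exact main_trivial hinv hrev hF hsym hover hirr p huv h2 hp x hxy hxs hvs hne1 hne2 h1
  · intro ℓ₁ ℓ₂ r' hL1 hL2 hne hs1 hs2
    obtain ⟨y₁, hy₁, hu₁⟩ := hL1
    obtain ⟨y₂, hy₂, hu₂⟩ := hL2
    have hm1 : α y₁ ℓ₁ = star r' := by
      have : α y₁ ℓ₁ ∈ starAt T α ℓ₁ := ⟨y₁, hy₁.symm, rfl⟩
      rwa [hs1] at this
    have hm2 : α y₂ ℓ₂ = star r' := by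
      have : α y₂ ℓ₂ ∈ starAt T α ℓ₂ := ⟨y₂, hy₂.symm, rfl⟩
      rwa [hs2] at this
    have hr1 : α ℓ₁ y₁ = r' := by rw [hsym y₁ ℓ₁ hy₁.symm, hm1, hinv]
    have hr2 : α ℓ₂ y₂ = r' := by rw [hsym y₂ ℓ₂ hy₂.symm, hm2, hinv]
    have hndeg : star r' ≠ r' := by
      have := (hF _ (hover ℓ₁)).1 (star r') (by rw [hs1]; rfl)
      intro hdeg; rw [hdeg] at this; exact this hdeg
    by_cases hadj : T.Adj ℓ₁ ℓ₂
    · exfalso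
      have hy1e : y₁ = ℓ₂ := (hu₁ ℓ₂ hadj).symm
      have hmem : α ℓ₁ ℓ₂ ∈ starAt T α ℓ₂ := ⟨ℓ₁, hadj, rfl⟩
      rw [hs2] at hmem
      have hsr : α ℓ₁ ℓ₂ = star r' := hmem
      apply hndeg
      calc star r' = α ℓ₁ ℓ₂ := hsr.symm
        _ = α ℓ₁ y₁ := by rw [hy1e]
        _ = r' := hr1
    · have hy1 : y₁ ≠ ℓ₂ := fun h => hadj (h ▸ hy₁)
      have hy2 : y₂ ≠ ℓ₁ := fun h => hadj (h ▸ hy₂).symm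
      obtain ⟨w⟩ := hT.1.preconnected y₁ y₂
      have hp0p : (w.toPath : T.Walk y₁ y₂).IsPath := w.toPath.2
      have hl1 : ℓ₁ ∉ (w.toPath : T.Walk y₁ y₂).support :=
        leaf_not_mem (fun z hz => hu₁ z hz) _ hp0p hy₁.ne hy2.symm
      have hl2 : ℓ₂ ∉ (w.toPath : T.Walk y₁ y₂).support :=
        leaf_not_mem (fun z hz => hu₂ z hz) _ hp0p hy1.symm hy₂.ne
      exact main_trivial hinv hrev hF hsym hover hirr (w.toPath : T.Walk y₁ y₂)
        hy₂.symm hr2 hp0p ℓ₁ hy₁ hl1 hl2 (fun h => hy2 h.1.symm) (fun h => hne h.1) hr1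

end SepDuality
end

section
/- Let (S→, ≤, *) be a separation system and F ⊆ 2^{S→}. If there exists an S-tree over F, then no orientation of S avoids F. -/
open Classical

namespace SepDuality

/-- If there exists an `S`-tree over `F`, then no orientation of `S` avoids `F`. -/
theorem no_orientation_avoids {D : Type*} [PartialOrder D] (star : D → D)
    (hinv : ∀ s : D, star (star s) = s)
    (hrev : ∀ r s : D, r ≤ s ↔ star s ≤ star r)
    (F : Set (Set D))
    {V : Type} [Fintype V] (T : SimpleGraph V) (α : V → V → D)
    (hT : IsSTree star Set.univ T α) (hover : IsOver T α F) :
    ∀ O : Set D, IsOrientation star Set.univ O → ¬Avoids O F := by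
  intro O hO hAv
  classical
  -- For each vertex t, the star at t is in F, so it is not a subset of O:
  -- pick a neighbour f t with α (f t) t ∉ O.
  have hchoice : ∀ t : V, ∃ x : V, T.Adj x t ∧ α x t ∉ O := by
    intro t
    have h1 := hAv _ (hover t)
    rw [Set.not_subset] at h1
    obtain ⟨d, ⟨x, hx, rfl⟩, hdO⟩ := h1
    exact ⟨x, hx, hdO⟩
  choose f hfadj hfO using hchoice
  -- The tree structure
  have htree : T.IsTree := ⟨hT.1, hT.2.1⟩
  -- Key: we cannot have both α (f t) t ∉ O and α t (f t) ∉ O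
  have hkey : ∀ t : V, f (f t) ≠ t := by
    intro t h
    have h1 : α (f t) t ∉ O := hfO t
    have h2 : α t (f t) ∉ O := by have := hfO (f t); rwa [h] at this
    have h3 : α (f t) t = star (α t (f t)) := hT.2.2.2 t (f t) (hfadj t).symm
    rcases hO.2.1 (α t (f t)) (Set.mem_univ _) with h4 | h4
    · exact h2 h4
    · exact h1 (h3 ▸ h4)
  -- Injective map V → edgeSet
  have hinj : Function.Injective (fun t : V => (⟨s(t, f t), (hfadj t).symm⟩ : T.edgeSet)) := by
    intro a b hab
    replace hab := congrArg Subtype.val hab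
    simp only [Sym2.eq_iff] at hab
    rcases hab with ⟨h1, _⟩ | ⟨h1, h2⟩
    · exact h1
    · subst h1; exact absurd h2 (hkey b)
  have hcard : Fintype.card V ≤ Fintype.card T.edgeSet := Fintype.card_le_of_injective _ hinj
  have hE : Finset.card T.edgeFinset + 1 = Fintype.card V := htree.card_edgeFinset
  rw [SimpleGraph.edgeFinset_card] at hE
  omega

end SepDuality
end

section
/- Let (U→, ≤, *, ∨, ∧) be a universe of separations containing a separation system (S→, ≤, *) with the induced order and involution. Let (T, α) be an order-respecting S-tree, rooted at some leaf x with incident edge e_x (oriented away from x as e_x→), and let s0 ∈ S→ be nondegenerate with α(e_x→) ≤ s0. Assume that the shift α' = α_{x,s0} maps E→(T) into S→. If s0 is nontrivial in S→, or if the supremum in U→ of two separations that are trivial in S→ is never degenerate, then (T, α') is an order-respecting S-tree. -/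
open Classical

namespace SepDuality

section TreeLemmas

open SimpleGraph SimpleGraph.Walk

variable {V : Type*} {T : SimpleGraph V}

private lemma path_length_eq_dist (hc : T.Connected) (ha : T.IsAcyclic) {u v : V}
    (p : T.Walk u v) (hp : p.IsPath) : p.length = T.dist u v := by
  obtain ⟨w, hw⟩ := hc.exists_walk_length_eq_dist u v
  have hwp : w.IsPath := w.isPath_of_length_eq_dist hw
  have h := ha.path_unique ⟨p, hp⟩ ⟨w, hwp⟩
  rw [show p = w from congrArg Subtype.val h, hw]

private lemma adj_dist_cases (hc : T.Connected) (ha : T.IsAcyclic) {a b : V}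
    (hab : T.Adj a b) (x : V) :
    T.dist x b = T.dist x a + 1 ∨ T.dist x a = T.dist x b + 1 := by
  obtain ⟨p, hp⟩ := hc.exists_walk_length_eq_dist x a
  have hpp : p.IsPath := p.isPath_of_length_eq_dist hp
  by_cases hb : b ∈ p.support
  · right
    have h1 : (p.takeUntil b hb).length = T.dist x b :=
      path_length_eq_dist hc ha _ (hpp.takeUntil hb)
    have h2 : (p.dropUntil b hb).length = T.dist b a :=
      path_length_eq_dist hc ha _ (hpp.dropUntil hb)
    have h3 : T.dist b a = 1 := SimpleGraph.dist_eq_one_iff_adj.mpr hab.symm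
    have h4 := congrArg SimpleGraph.Walk.length (p.take_spec hb)
    rw [SimpleGraph.Walk.length_append] at h4
    omega
  · left
    have hq : (p.concat hab).IsPath := by
      rw [← SimpleGraph.Walk.isPath_reverse_iff, SimpleGraph.Walk.reverse_concat]
      exact hpp.reverse.cons (by simp [SimpleGraph.Walk.support_reverse, hb])
    have h1 : (p.concat hab).length = T.dist x b := path_length_eq_dist hc ha _ hq
    rw [SimpleGraph.Walk.length_concat] at h1
    omega

private lemma mem_of_dist_path (hc : T.Connected) (ha : T.IsAcyclic) {x a b : V}
    (hab : T.Adj a b) (hd : T.dist x b = T.dist x a + 1) (P : T.Walk x b)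
    (hP : P.IsPath) : a ∈ P.support := by
  obtain ⟨p, hp⟩ := hc.exists_walk_length_eq_dist x a
  have hpp : p.IsPath := p.isPath_of_length_eq_dist hp
  have hb : b ∉ p.support := by
    intro hb
    have h1 : (p.takeUntil b hb).length = T.dist x b :=
      path_length_eq_dist hc ha _ (hpp.takeUntil hb)
    have h2 := p.length_takeUntil_le hb
    omega
  have hq : (p.concat hab).IsPath := by
    rw [← SimpleGraph.Walk.isPath_reverse_iff, SimpleGraph.Walk.reverse_concat]
    exact hpp.reverse.cons (by simp [SimpleGraph.Walk.support_reverse, hb])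
  have h := ha.path_unique ⟨P, hP⟩ ⟨p.concat hab, hq⟩
  rw [show P = p.concat hab from congrArg Subtype.val h,
    SimpleGraph.Walk.support_concat]
  simp only [List.concat_eq_append, List.mem_append]
  exact Or.inl p.end_mem_support

private lemma eq_on_path_of_dist_eq (hc : T.Connected) (ha : T.IsAcyclic)
    {x b a d : V} (P : T.Walk x b) (hP : P.IsPath) (haP : a ∈ P.support)
    (hdP : d ∈ P.support) (hdist : T.dist x a = T.dist x d) : a = d := by
  have hq := hP.takeUntil haP
  have hqlen : (P.takeUntil a haP).length = T.dist x a := path_length_eq_dist hc ha _ hq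
  by_cases hdq : d ∈ (P.takeUntil a haP).support
  · have hr := hq.takeUntil hdq
    have hrlen : ((P.takeUntil a haP).takeUntil d hdq).length = T.dist x d :=
      path_length_eq_dist hc ha _ hr
    have h4 := congrArg SimpleGraph.Walk.length ((P.takeUntil a haP).take_spec hdq)
    rw [SimpleGraph.Walk.length_append] at h4
    have h0 : ((P.takeUntil a haP).dropUntil d hdq).length = 0 := by omega
    exact (SimpleGraph.Walk.eq_of_length_eq_zero h0).symm
  · have hdd : d ∈ (P.dropUntil a haP).support := by
      rw [← P.take_spec haP, SimpleGraph.Walk.mem_support_append_iff] at hdP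
      exact hdP.resolve_left hdq
    have hw : ((P.takeUntil a haP).append ((P.dropUntil a haP).takeUntil d hdd)).IsPath := by
      apply SimpleGraph.Walk.IsPath.of_append_left
        (q := (P.dropUntil a haP).dropUntil d hdd)
      rw [← SimpleGraph.Walk.append_assoc, (P.dropUntil a haP).take_spec hdd,
        P.take_spec haP]
      exact hP
    have hwlen := path_length_eq_dist hc ha _ hw
    rw [SimpleGraph.Walk.length_append] at hwlen
    have h0 : ((P.dropUntil a haP).takeUntil d hdd).length = 0 := by omega
    exact SimpleGraph.Walk.eq_of_length_eq_zero h0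

private lemma edgeLE_root_iff (hc : T.Connected) (ha : T.IsAcyclic) {x y : V}
    (hxy : T.Adj x y) (hleaf : ∀ z, T.Adj x z → z = y) {a b : V} (hab : T.Adj a b) :
    edgeLE T (x, y) (a, b) ↔ T.dist x b = T.dist x a + 1 := by
  constructor
  · rintro (heq | ⟨h1, h2, p, hp, hxs, hbs⟩)
    · obtain ⟨rfl, rfl⟩ := Prod.mk.injEq x y a b ▸ heq
      rw [SimpleGraph.dist_self, SimpleGraph.dist_eq_one_iff_adj.mpr hxy]
    · simp only at h1 h2 hxs hbs
      have hbx : b ≠ x := by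
        intro hbx
        exact h2 ⟨hbx.symm, (hleaf a (hbx ▸ hab.symm)).symm⟩
      have hP : (SimpleGraph.Walk.cons hxy p).IsPath := hp.cons hxs
      have hbP : b ∉ (SimpleGraph.Walk.cons hxy p).support := by
        rw [SimpleGraph.Walk.support_cons]
        simp [hbx, hbs]
      rcases adj_dist_cases hc ha hab x with h | h
      · exact h
      · exact absurd (mem_of_dist_path hc ha hab.symm h _ hP) hbP
  · intro hd
    by_cases hax : a = x
    · subst hax
      have hb : T.Adj a b := hab
      have : T.dist a b = 1 := by rw [hd, SimpleGraph.dist_self]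
      have hby : b = y := hleaf b hab
      exact Or.inl (by rw [hby])
    · obtain ⟨P, hPl⟩ := hc.exists_walk_length_eq_dist x a
      have hP : P.IsPath := P.isPath_of_length_eq_dist hPl
      have hnn : ¬ P.Nil := by
        intro hn
        exact hax (SimpleGraph.Walk.eq_of_length_eq_zero
          (SimpleGraph.Walk.nil_iff_length_eq.mp hn)).symm
      obtain ⟨w, hxw, q, rfl⟩ := SimpleGraph.Walk.not_nil_iff.mp hnn
      obtain rfl : w = y := hleaf w hxw
      obtain ⟨hqp, hxq⟩ := (SimpleGraph.Walk.cons_isPath_iff hxw q).mp hP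
      have hxb : x ≠ b := by
        intro h
        rw [← h, SimpleGraph.dist_self] at hd
        omega
      have hbP : b ∉ (SimpleGraph.Walk.cons hxw q).support := by
        intro hbP
        have h1 : ((SimpleGraph.Walk.cons hxw q).takeUntil b hbP).length = T.dist x b :=
          path_length_eq_dist hc ha _ (hP.takeUntil hbP)
        have h2 := (SimpleGraph.Walk.cons hxw q).length_takeUntil_le hbP
        omega
      have hbq : b ∉ q.support := by
        rw [SimpleGraph.Walk.support_cons] at hbP
        exact fun h => hbP (List.mem_cons_of_mem _ h)
      exact Or.inr ⟨fun hh => hax hh.1.symm, fun hh => hxb hh.1, q, hqp, hxq, hbq⟩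

private lemma edgeLT_up (hc : T.Connected) (ha : T.IsAcyclic) {x a b c d : V}
    (hab : T.Adj a b) (hcd : T.Adj c d) (hlt : edgeLT T (a, b) (c, d))
    (h1 : T.dist x b = T.dist x a + 1) : T.dist x d = T.dist x c + 1 := by
  rcases adj_dist_cases hc ha hcd x with h | h
  · exact h
  exfalso
  obtain ⟨hne1, hne2, p, hp, hap, hdp⟩ := hlt
  simp only at hne1 hne2 hap hdp
  obtain ⟨Pb, hPbl⟩ := hc.exists_walk_length_eq_dist x b
  have hPb : Pb.IsPath := Pb.isPath_of_length_eq_dist hPbl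
  obtain ⟨Pc, hPcl⟩ := hc.exists_walk_length_eq_dist x c
  have hPc : Pc.IsPath := Pc.isPath_of_length_eq_dist hPcl
  have hdPb : d ∈ Pb.support := by
    have hd' : d ∈ ((Pb.append p).toPath : T.Walk x c).support :=
      mem_of_dist_path hc ha hcd.symm h _ (Pb.append p).toPath.2
    have hsub := SimpleGraph.Walk.support_toPath_subset (Pb.append p) hd'
    rw [SimpleGraph.Walk.mem_support_append_iff] at hsub
    exact hsub.resolve_right hdp
  have haPc : a ∈ Pc.support := by
    have ha' : a ∈ ((Pc.append p.reverse).toPath : T.Walk x b).support :=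
      mem_of_dist_path hc ha hab h1 _ (Pc.append p.reverse).toPath.2
    have hsub := SimpleGraph.Walk.support_toPath_subset (Pc.append p.reverse) ha'
    rw [SimpleGraph.Walk.mem_support_append_iff] at hsub
    refine hsub.resolve_right (fun hmem => hap ?_)
    rwa [SimpleGraph.Walk.support_reverse, List.mem_reverse] at hmem
  have hdb : d ≠ b := fun hh => hdp (hh ▸ p.start_mem_support)
  have hac : a ≠ c := fun hh => hap (hh ▸ p.end_mem_support)
  have hineq1 : T.dist x d + 1 ≤ T.dist x b := by
    have ht := path_length_eq_dist hc ha _ (hPb.takeUntil hdPb)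
    have hs := congrArg SimpleGraph.Walk.length (Pb.take_spec hdPb)
    rw [SimpleGraph.Walk.length_append] at hs
    have h0 : (Pb.dropUntil d hdPb).length ≠ 0 :=
      fun h0 => hdb (SimpleGraph.Walk.eq_of_length_eq_zero h0)
    omega
  have hineq2 : T.dist x a + 1 ≤ T.dist x c := by
    have ht := path_length_eq_dist hc ha _ (hPc.takeUntil haPc)
    have hs := congrArg SimpleGraph.Walk.length (Pc.take_spec haPc)
    rw [SimpleGraph.Walk.length_append] at hs
    have h0 : (Pc.dropUntil a haPc).length ≠ 0 :=
      fun h0 => hac (SimpleGraph.Walk.eq_of_length_eq_zero h0)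
    omega
  have haPb : a ∈ Pb.support := mem_of_dist_path hc ha hab h1 Pb hPb
  have had : a = d := eq_on_path_of_dist_eq hc ha Pb hPb haPb hdPb (by omega)
  subst had
  have hbc : b ≠ c := fun hh => hne2 ⟨rfl, hh⟩
  have hq : (SimpleGraph.Walk.cons hab.symm
      (SimpleGraph.Walk.cons hcd.symm SimpleGraph.Walk.nil)).IsPath := by
    rw [SimpleGraph.Walk.isPath_def]
    simp [hab.ne', hbc, fun h : a = c => hac h]
  have hpq := ha.path_unique ⟨p, hp⟩ ⟨_, hq⟩
  apply hap
  rw [show p = _ from congrArg Subtype.val hpq]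
  simp

private lemma edgeLT_reverse {a b c d : V} (h : edgeLT T (a, b) (c, d)) :
    edgeLT T (d, c) (b, a) := by
  obtain ⟨h1, h2, p, hp, h3, h4⟩ := h
  simp only at h1 h2 h3 h4
  refine ⟨fun ⟨u, v⟩ => h1 ⟨v.symm, u.symm⟩, fun ⟨u, v⟩ => h2 ⟨u.symm, v.symm⟩,
    p.reverse, hp.reverse, ?_, ?_⟩ <;>
    simp [SimpleGraph.Walk.support_reverse, h3, h4]

end TreeLemmas

/-- **Shifting lemma.** Let `(T, α)` be an order-respecting `S`-tree rooted at a leaf `x`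
(with unique neighbour `y`), `s0 ∈ S→` nondegenerate with `α(e_x→) ≤ s0`, and assume the
shift `α' = α_{x,s0}` maps `E→(T)` into `S→`. If `s0` is nontrivial in `S→`, or if the
supremum in `U→` of two separations trivial in `S→` is never degenerate, then `(T, α')`
is an order-respecting `S`-tree. -/
theorem shift_orderRespecting {U : Type*} [Lattice U] (star : U → U)
    (hinv : ∀ s : U, star (star s) = s)
    (hrev : ∀ r s : U, r ≤ s ↔ star s ≤ star r)
    (S : Set U) (hSstar : ∀ s ∈ S, star s ∈ S)
    {V : Type} [Fintype V] (T : SimpleGraph V) (α : V → V → U)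
    (hT : IsSTree star S T α) (hOR : OrderRespecting T α)
    (x y : V) (hxy : T.Adj x y) (hleaf : ∀ z : V, T.Adj x z → z = y)
    (s0 : U) (hs0S : s0 ∈ S) (hs0nd : star s0 ≠ s0) (hle : α x y ≤ s0)
    (hmaps : ∀ a b : V, T.Adj a b → shiftAlpha star T x y s0 α a b ∈ S)
    (hcase : ¬TrivialIn star S s0 ∨
      ∀ r r' : U, r ∈ S → r' ∈ S → TrivialIn star S r → TrivialIn star S r' →
        star (r ⊔ r') ≠ r ⊔ r') :
    IsSTree star S T (shiftAlpha star T x y s0 α) ∧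
      OrderRespecting T (shiftAlpha star T x y s0 α) := by
  obtain ⟨hconn, hacyc, hmem, hstar⟩ := hT
  have hiff : ∀ a b : V, T.Adj a b →
      (edgeLE T (x, y) (a, b) ↔ T.dist x b = T.dist x a + 1) :=
    fun a b h => edgeLE_root_iff hconn hacyc hxy hleaf h
  have hstar_mono : ∀ r s : U, r ≤ s → star s ≤ star r := fun r s h => (hrev r s).mp h
  have honeside : ∀ a b : V, T.Adj a b →
      (edgeLE T (x, y) (a, b) ↔ ¬ edgeLE T (x, y) (b, a)) := by
    intro a b h
    rw [hiff a b h, hiff b a h.symm]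
    rcases adj_dist_cases hconn hacyc h x with h1 | h1 <;> omega
  have hrevα : ∀ a b : V, T.Adj a b →
      shiftAlpha star T x y s0 α b a = star (shiftAlpha star T x y s0 α a b) := by
    intro a b h
    by_cases hP : edgeLE T (x, y) (a, b)
    · have hP' : ¬ edgeLE T (x, y) (b, a) := (honeside a b h).mp hP
      simp only [shiftAlpha, if_pos hP, if_neg hP']
    · have hP' : edgeLE T (x, y) (b, a) := by
        by_contra h'
        exact hP ((honeside a b h).mpr h')
      simp only [shiftAlpha, if_neg hP, if_pos hP']
      rw [hinv]
  refine ⟨⟨hconn, hacyc, fun a b h => hmaps a b h, hrevα⟩, ?_⟩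
  rintro ⟨a, b⟩ ⟨c, d⟩ hab hcd hef
  simp only at hab hcd ⊢
  have hord : α a b ≤ α c d := hOR (a, b) (c, d) hab hcd hef
  by_cases hPe : edgeLE T (x, y) (a, b)
  · have hPf : edgeLE T (x, y) (c, d) := by
      rcases hef with heq | hlt
      · cases heq; exact hPe
      · rw [hiff c d hcd]
        exact edgeLT_up hconn hacyc hab hcd hlt ((hiff a b hab).mp hPe)
    simp only [shiftAlpha, if_pos hPe, if_pos hPf]
    exact sup_le_sup_right hord s0
  · by_cases hPf : edgeLE T (x, y) (c, d)
    · simp only [shiftAlpha, if_neg hPe, if_pos hPf]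
      calc star (α b a ⊔ s0) ≤ star (α b a) := hstar_mono _ _ le_sup_left
        _ = star (star (α a b)) := by rw [hstar a b hab]
        _ = α a b := hinv _
        _ ≤ α c d := hord
        _ ≤ α c d ⊔ s0 := le_sup_left
    · simp only [shiftAlpha, if_neg hPe, if_neg hPf]
      apply hstar_mono
      apply sup_le_sup_right
      apply hOR (d, c) (b, a) hcd.symm hab.symm
      rcases hef with heq | hlt
      · cases heq; exact Or.inl rfl
      · exact Or.inr (edgeLT_reverse hlt)


end SepDuality
end

section
/- Let (U→, ≤, *, ∨, ∧) be a universe of separations containing a separation system (S→, ≤, *) with the induced order and involution, and let F ⊆ 2^{U→} be a family of stars. Let (T, α) be a tight and irredundant S-tree over F with at least one edge, rooted at a leaf x with incident edge e_x→ oriented away from x. Assume that r := α(e_x→) is nontrivial in S→ and nondegenerate, let s0 ∈ S→ emulate r in S→ for F, and let α' := α_{x,s0}. Then (T, α') is an order-respecting S-tree over F ∪ {{s0*}}, in which the star {s0*} is associated with x but with no other leaf of T. -/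
open Classical

namespace SepDuality

section AuxGraph

open SimpleGraph

variable {V : Type*} {T : SimpleGraph V} {x y : V}

lemma notMem_edges_right {u v a b : V} {p : T.Walk u v}
    (hb : b ∉ p.support) : s(a, b) ∉ p.edges :=
  fun he => hb (p.snd_mem_support_of_mem_edges he)

lemma notMem_edges_left {u v a b : V} {p : T.Walk u v}
    (ha : a ∉ p.support) : s(a, b) ∉ p.edges :=
  fun he => ha (p.fst_mem_support_of_mem_edges he)

lemma bridge_contra (hac : T.IsAcyclic) {a b : V} (hab : T.Adj a b)
    (W : T.Walk a b) (hW : s(a, b) ∉ W.edges) : False :=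
  (SimpleGraph.isBridge_iff.mp
      (SimpleGraph.isAcyclic_iff_forall_adj_isBridge.mp hac hab))
    (SimpleGraph.reachable_delete_edges_iff_exists_walk.mpr ⟨W, hW⟩)

/-- A leaf `x` (with unique neighbour `y`) lies on no path between two
vertices distinct from `x`. -/
lemma leaf_avoid (hleaf : ∀ z : V, T.Adj x z → z = y) :
    ∀ {u v : V} (p : T.Walk u v), p.IsPath → u ≠ x → v ≠ x → x ∉ p.support := by
  intro u v p
  induction p with
  | nil =>
    intro _ hu _ hx
    simp only [SimpleGraph.Walk.support_nil, List.mem_singleton] at hx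
    exact hu hx.symm
  | @cons a b c h q ih =>
    intro hp ha hc hx
    rw [SimpleGraph.Walk.support_cons, List.mem_cons] at hx
    rcases hx with h1 | h2
    · exact ha h1.symm
    · rcases eq_or_ne b x with rfl | hb
      · cases q with
        | nil => exact hc rfl
        | @cons _ z _ h2' q' =>
          have hz : z = y := hleaf z h2'
          have hay : a = y := hleaf a h.symm
          rw [SimpleGraph.Walk.cons_isPath_iff] at hp
          apply hp.2
          rw [SimpleGraph.Walk.support_cons, List.mem_cons]
          exact Or.inr (by rw [hay, ← hz]; exact q'.start_mem_support)
      · rw [SimpleGraph.Walk.cons_isPath_iff] at hp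
        exact ih hp.1 hb hc h2

/-- Reversing both edges reverses the natural order. -/
lemma edgeLT_swap {e f : V × V} (h : edgeLT T e f) :
    edgeLT T (f.2, f.1) (e.2, e.1) := by
  obtain ⟨c1, c2, p, hp, h1, h2⟩ := h
  refine ⟨fun ⟨a, b⟩ => c1 ⟨b.symm, a.symm⟩, fun ⟨a, b⟩ => c2 ⟨a.symm, b.symm⟩,
    p.reverse, hp.reverse, ?_, ?_⟩
  · rw [SimpleGraph.Walk.support_reverse, List.mem_reverse]; exact h2
  · rw [SimpleGraph.Walk.support_reverse, List.mem_reverse]; exact h1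

/-- No oriented edge is both `≥ (x,y)` and with its reverse `≥ (x,y)`. -/
lemma not_both (hac : T.IsAcyclic) (hxy : T.Adj x y) {a b : V} (hab : T.Adj a b)
    (h1 : edgeLE T (x, y) (a, b)) (h2 : edgeLE T (x, y) (b, a)) : False := by
  rcases h1 with he1 | hl1 <;> rcases h2 with he2 | hl2
  · injection he1 with i1 _
    injection he2 with _ j2
    exact hxy.ne (i1.trans j2.symm)
  · injection he1 with i1 i2
    exact hl2.2.1 ⟨i1, i2⟩
  · injection he2 with i1 i2
    exact hl1.2.1 ⟨i1, i2⟩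
  · obtain ⟨_, _, p, hp, hpx, hpb⟩ := hl1
    obtain ⟨_, _, q, hq, hqx, hqa⟩ := hl2
    refine bridge_contra hac hab (p.reverse.append q) ?_
    rw [SimpleGraph.Walk.edges_append]
    intro hf
    rcases List.mem_append.mp hf with hf | hf
    · rw [SimpleGraph.Walk.edges_reverse, List.mem_reverse] at hf
      exact notMem_edges_right hpb hf
    · exact notMem_edges_left hqa hf

/-- Every oriented edge of `T` is comparable with `(x,y)` in one of its two
orientations. -/
lemma at_least_one (hconn : T.Connected) (hxy : T.Adj x y)
    (hleaf : ∀ z : V, T.Adj x z → z = y) {a b : V} (hab : T.Adj a b) :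
    edgeLE T (x, y) (a, b) ∨ edgeLE T (x, y) (b, a) := by
  by_cases hax : a = x
  · subst hax
    exact Or.inl (Or.inl (by rw [hleaf b hab]))
  by_cases hbx : b = x
  · subst hbx
    exact Or.inr (Or.inl (by rw [hleaf a hab.symm]))
  obtain ⟨w0⟩ := hconn.preconnected y a
  have hp : w0.bypass.IsPath := w0.bypass_isPath
  have hxp : x ∉ w0.bypass.support := leaf_avoid hleaf w0.bypass hp hxy.ne' hax
  by_cases hbp : b ∈ w0.bypass.support
  · right; right
    refine ⟨fun ⟨hh, _⟩ => hbx hh.symm, fun ⟨hh, _⟩ => hax hh.symm,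
      w0.bypass.takeUntil b hbp, hp.takeUntil hbp, ?_, ?_⟩
    · exact fun h => hxp (SimpleGraph.Walk.support_takeUntil_subset _ hbp h)
    · intro haIn
      have hnd : ((w0.bypass.takeUntil b hbp).append
          (w0.bypass.dropUntil b hbp)).support.Nodup := by
        rw [SimpleGraph.Walk.take_spec]
        exact hp.support_nodup
      rw [SimpleGraph.Walk.support_append] at hnd
      have hdisj := List.disjoint_of_nodup_append hnd
      have haTail : a ∈ (w0.bypass.dropUntil b hbp).support.tail := by
        have h1 : a ∈ (w0.bypass.dropUntil b hbp).support :=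
          SimpleGraph.Walk.end_mem_support _
        rw [SimpleGraph.Walk.support_eq_cons (w0.bypass.dropUntil b hbp),
          List.mem_cons] at h1
        rcases h1 with h1 | h1
        · exact absurd h1 hab.ne
        · exact h1
      exact hdisj haIn haTail
  · left; right
    exact ⟨fun ⟨hh, _⟩ => hax hh.symm, fun ⟨hh, _⟩ => hbx hh.symm,
      w0.bypass, hp, hxp, hbp⟩

lemma no_yx (hxy : T.Adj x y) : ¬ edgeLE T (x, y) (y, x) := by
  rintro (he | hlt)
  · injection he with i1 _
    exact hxy.ne i1
  · exact hlt.2.1 ⟨rfl, rfl⟩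

/-- Edges above an edge above `(x,y)` are above `(x,y)`. -/
lemma edge_le_trans (hac : T.IsAcyclic) (hxy : T.Adj x y)
    (hleaf : ∀ z : V, T.Adj x z → z = y) {a b c d : V}
    (hab : T.Adj a b) (hcd : T.Adj c d)
    (h1 : edgeLE T (x, y) (a, b)) (h2 : edgeLT T (a, b) (c, d)) :
    edgeLE T (x, y) (c, d) := by
  obtain ⟨d1, d2, q, hq, hqa, hqd⟩ := h2
  rcases h1 with he | hl
  · right
    injection he with i1 i2
    subst i1; subst i2
    exact ⟨d1, d2, q, hq, hqa, hqd⟩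
  · obtain ⟨e1, e2, p, hp, hpx, hpb⟩ := hl
    by_cases hcx : c = x
    · left
      rw [hcx, hleaf d (hcx ▸ hcd)]
    by_cases hdx : d = x
    · exfalso
      have hcy : c = y := hleaf c (hdx ▸ hcd).symm
      subst hdx; subst hcy
      refine bridge_contra hac hab (p.reverse.append q.reverse) ?_
      rw [SimpleGraph.Walk.edges_append]
      intro hf
      rcases List.mem_append.mp hf with hf | hf
      · rw [SimpleGraph.Walk.edges_reverse, List.mem_reverse] at hf
        exact notMem_edges_right hpb hf
      · rw [SimpleGraph.Walk.edges_reverse, List.mem_reverse] at hf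
        exact notMem_edges_left hqa hf
    have hbx : b ≠ x := by
      intro hf; subst hf
      exact e2 ⟨rfl, (hleaf a hab.symm).symm⟩
    have hdp : d ∉ p.support := by
      intro hdp
      refine bridge_contra hac hab
        ((p.dropUntil d hdp).reverse.append (SimpleGraph.Walk.cons hcd.symm q.reverse)) ?_
      rw [SimpleGraph.Walk.edges_append]
      intro hf
      rcases List.mem_append.mp hf with hf | hf
      · rw [SimpleGraph.Walk.edges_reverse, List.mem_reverse] at hf
        exact notMem_edges_right
          (fun h => hpb (SimpleGraph.Walk.support_dropUntil_subset p hdp h)) hf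
      · rw [SimpleGraph.Walk.edges_cons, List.mem_cons] at hf
        rcases hf with hf | hf
        · rcases Sym2.eq_iff.mp hf with ⟨hf1, hf2⟩ | ⟨hf1, hf2⟩
          · exact d2 ⟨hf1, hf2⟩
          · exact d1 ⟨hf1, hf2⟩
        · rw [SimpleGraph.Walk.edges_reverse, List.mem_reverse] at hf
          exact notMem_edges_left hqa hf
    right
    refine ⟨fun ⟨hf, _⟩ => hcx hf.symm, fun ⟨hf, _⟩ => hdx hf.symm,
      (p.append (SimpleGraph.Walk.cons hab q)).bypass,
      SimpleGraph.Walk.bypass_isPath _, ?_, ?_⟩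
    · intro hf
      have hm := SimpleGraph.Walk.support_bypass_subset _ hf
      rw [SimpleGraph.Walk.support_append, SimpleGraph.Walk.support_cons,
        List.tail_cons, List.mem_append] at hm
      rcases hm with hm | hm
      · exact hpx hm
      · exact leaf_avoid hleaf q hq hbx hcx hm
    · intro hf
      have hm := SimpleGraph.Walk.support_bypass_subset _ hf
      rw [SimpleGraph.Walk.support_append, SimpleGraph.Walk.support_cons,
        List.tail_cons, List.mem_append] at hm
      rcases hm with hm | hm
      · exact hdp hm
      · exact hqd hm

/-- For `t ≠ x` there is an edge `(u,t)` at `t` pointing away from `x`. -/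
lemma entry_edge (hconn : T.Connected) (hxy : T.Adj x y)
    (hleaf : ∀ z : V, T.Adj x z → z = y) {t : V} (ht : t ≠ x) :
    ∃ u : V, T.Adj u t ∧ edgeLE T (x, y) (u, t) := by
  obtain ⟨w0⟩ := hconn.preconnected x t
  obtain ⟨pr, hpr⟩ : ∃ pr : T.Walk t x, pr.IsPath :=
    ⟨w0.bypass.reverse, w0.bypass_isPath.reverse⟩
  cases pr with
  | nil => exact absurd rfl ht
  | @cons _ u _ h q =>
    rw [SimpleGraph.Walk.cons_isPath_iff] at hpr
    by_cases hux : u = x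
    · subst hux
      have hty : t = y := hleaf t h.symm
      exact ⟨u, h.symm, Or.inl (by rw [hty])⟩
    · obtain ⟨qr, hqr, hqrt⟩ : ∃ qr : T.Walk x u, qr.IsPath ∧ t ∉ qr.support :=
        ⟨q.reverse, hpr.1.reverse, by
          rw [SimpleGraph.Walk.support_reverse, List.mem_reverse]; exact hpr.2⟩
      cases qr with
      | nil => exact absurd rfl (Ne.symm hux)
      | @cons _ w _ h2 q2 =>
        have hw : w = y := hleaf w h2
        subst hw
        rw [SimpleGraph.Walk.cons_isPath_iff] at hqr
        rw [SimpleGraph.Walk.support_cons, List.mem_cons] at hqrt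
        push_neg at hqrt
        refine ⟨u, h.symm, Or.inr ⟨fun ⟨hf, _⟩ => hux hf.symm,
          fun ⟨hf, _⟩ => ht hf.symm, q2, hqr.1, hqr.2, hqrt.2⟩⟩

end AuxGraph

section AuxAlpha

variable {U : Type*} [Lattice U] {star : U → U} {S : Set U} {F : Set (Set U)}
variable {V : Type*} {T : SimpleGraph V} {α : V → V → U} {x y : V}

/-- Two consecutive oriented edges of an irredundant `S`-tree over stars are
order-comparable. -/
lemma star_step (hinv : ∀ s : U, star (star s) = s)
    (hT : IsSTree star S T α) (hover : IsOver T α F)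
    (hF : ∀ σ ∈ F, IsStarSet star σ) (hirr : Irredundant T α)
    {a b v : V} (hab : T.Adj a b) (hvb : T.Adj v b) (hne : a ≠ v) :
    α a b ≤ α b v := by
  have h1 : α a b ∈ starAt T α b := ⟨a, hab, rfl⟩
  have h2 : α v b ∈ starAt T α b := ⟨v, hvb, rfl⟩
  have hne' : α a b ≠ α v b := hirr b a v hab hvb hne
  have hle := (hF _ (hover b)).2 _ h1 _ h2 hne'
  have hst : α b v = star (α v b) := hT.2.2.2 v b hvb
  rw [hst]
  exact hle

lemma chain_le_s11 (hinv : ∀ s : U, star (star s) = s)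
    (hT : IsSTree star S T α) (hover : IsOver T α F)
    (hF : ∀ σ ∈ F, IsStarSet star σ) (hirr : Irredundant T α) :
    ∀ {b c : V} (p : T.Walk b c), p.IsPath → ∀ {a d : V}, T.Adj a b → T.Adj c d →
      a ∉ p.support → d ∉ p.support → (b = c → a ≠ d) → α a b ≤ α c d := by
  intro b c p
  induction p with
  | nil =>
    intro _ a d hab hcd _ _ hne
    exact star_step hinv hT hover hF hirr hab hcd.symm (hne rfl)
  | @cons b w c h q ih =>
    intro hp a d hab hcd ha hd hne
    rw [SimpleGraph.Walk.cons_isPath_iff] at hp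
    have haw : a ≠ w := fun hf => ha (by
      rw [SimpleGraph.Walk.support_cons]
      exact List.mem_cons_of_mem _ (hf ▸ q.start_mem_support))
    have h1 : α a b ≤ α b w := star_step hinv hT hover hF hirr hab h.symm haw
    have hd' : d ∉ q.support := fun hf => hd (by
      rw [SimpleGraph.Walk.support_cons]
      exact List.mem_cons_of_mem _ hf)
    have h2 : α b w ≤ α c d := ih hp.1 h hcd hp.2 hd'
      (fun _ hbd => hd (by
        rw [SimpleGraph.Walk.support_cons]
        exact List.mem_cons.mpr (Or.inl hbd.symm)))
    exact h1.trans h2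

/-- An irredundant `S`-tree over stars is order-respecting. -/
lemma order_resp (hinv : ∀ s : U, star (star s) = s)
    (hT : IsSTree star S T α) (hover : IsOver T α F)
    (hF : ∀ σ ∈ F, IsStarSet star σ) (hirr : Irredundant T α) :
    OrderRespecting T α := by
  intro e f he hf hef
  rcases hef with rfl | hlt
  · exact le_refl _
  · obtain ⟨c1, c2, p, hp, h1, h2⟩ := hlt
    exact chain_le_s11 hinv hT hover hF hirr p hp he hf h1 h2
      (fun heq had => c2 ⟨had, heq⟩)

lemma inv_step (hinv : ∀ s : U, star (star s) = s)
    (hT : IsSTree star S T α) (hover : IsOver T α F)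
    (hF : ∀ σ ∈ F, IsStarSet star σ) (hirr : Irredundant T α)
    {r : U} (hnt : ¬TrivialIn star S r)
    {a b v : V} (hab : T.Adj a b) (hbv : T.Adj b v) (hne : a ≠ v)
    (h1 : r ≤ α a b) (h2 : α a b ≠ star r) (h3 : α a b ≠ r) :
    r ≤ α b v ∧ α b v ≠ star r ∧ α b v ≠ r := by
  have hle : α a b ≤ α b v := star_step hinv hT hover hF hirr hab hbv.symm hne
  refine ⟨h1.trans hle, ?_, ?_⟩
  · intro hf
    have hvb : α v b = star (α b v) := hT.2.2.2 b v hbv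
    have hvb' : α v b = r := by rw [hvb, hf, hinv]
    have hle2 : α v b ≤ α b a := star_step hinv hT hover hF hirr hbv.symm hab hne.symm
    have hba : α b a = star (α a b) := hT.2.2.2 a b hab
    have hr2 : r ≤ star (α a b) := by rw [← hba, ← hvb']; exact hle2
    exact hnt ⟨α a b, hT.2.2.1 a b hab, lt_of_le_of_ne h1 (Ne.symm h3),
      lt_of_le_of_ne hr2 (fun hf2 => h2 (by rw [hf2, hinv]))⟩
  · intro hf
    exact h3 (le_antisymm (hf ▸ hle) h1)

lemma inv_base (hinv : ∀ s : U, star (star s) = s)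
    (hT : IsSTree star S T α) (hover : IsOver T α F)
    (hF : ∀ σ ∈ F, IsStarSet star σ) (hirr : Irredundant T α)
    (htight : Tight star T α)
    (hxy : T.Adj x y) (hnd : star (α x y) ≠ α x y)
    {v : V} (hyv : T.Adj y v) (hvx : v ≠ x) :
    α x y ≤ α y v ∧ α y v ≠ star (α x y) ∧ α y v ≠ α x y := by
  have hxv : x ≠ v := fun h => hvx h.symm
  refine ⟨star_step hinv hT hover hF hirr hxy hyv.symm hxv, ?_, ?_⟩
  · intro hf
    have hvy : α v y = α x y := by rw [hT.2.2.2 y v hyv, hf, hinv]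
    exact hirr y x v hxy hyv.symm hxv hvy.symm
  · intro hf
    have hmem : α x y ∈ starAt T α y := ⟨x, hxy, rfl⟩
    have hmem2 : star (α x y) ∈ starAt T α y :=
      ⟨v, hyv.symm, by rw [hT.2.2.2 y v hyv, hf]⟩
    exact htight y _ hmem hnd hmem2

lemma chain_inv (hinv : ∀ s : U, star (star s) = s)
    (hT : IsSTree star S T α) (hover : IsOver T α F)
    (hF : ∀ σ ∈ F, IsStarSet star σ) (hirr : Irredundant T α)
    {r : U} (hnt : ¬TrivialIn star S r) :
    ∀ {b c : V} (q : T.Walk b c), q.IsPath → ∀ {a v : V}, T.Adj a b → T.Adj c v →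
      a ∉ q.support → v ∉ q.support → (b = c → a ≠ v) →
      (r ≤ α a b ∧ α a b ≠ star r ∧ α a b ≠ r) →
      r ≤ α c v ∧ α c v ≠ star r ∧ α c v ≠ r := by
  intro b c q
  induction q with
  | nil =>
    intro _ a v hab hcv _ _ hne hI
    exact inv_step hinv hT hover hF hirr hnt hab hcv (hne rfl) hI.1 hI.2.1 hI.2.2
  | @cons b w c h q ih =>
    intro hp a v hab hcv ha hv hne hI
    rw [SimpleGraph.Walk.cons_isPath_iff] at hp
    have haw : a ≠ w := fun hf => ha (by
      rw [SimpleGraph.Walk.support_cons]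
      exact List.mem_cons_of_mem _ (hf ▸ q.start_mem_support))
    have hI2 := inv_step hinv hT hover hF hirr hnt hab h haw hI.1 hI.2.1 hI.2.2
    have hv' : v ∉ q.support := fun hf => hv (by
      rw [SimpleGraph.Walk.support_cons]
      exact List.mem_cons_of_mem _ hf)
    exact ih hp.1 h hcv hp.2 hv'
      (fun _ hbv => hv (by
        rw [SimpleGraph.Walk.support_cons]
        exact List.mem_cons.mpr (Or.inl hbv.symm))) hI2

/-- The key invariant along edges strictly above `(x,y)`. -/
lemma edge_inv (hinv : ∀ s : U, star (star s) = s)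
    (hT : IsSTree star S T α) (hover : IsOver T α F)
    (hF : ∀ σ ∈ F, IsStarSet star σ) (hirr : Irredundant T α)
    (htight : Tight star T α)
    (hxy : T.Adj x y) (hleaf : ∀ z : V, T.Adj x z → z = y)
    (hnt : ¬TrivialIn star S (α x y)) (hnd : star (α x y) ≠ α x y)
    {c v : V} (hcv : T.Adj c v) (hlt : edgeLT T (x, y) (c, v)) :
    α x y ≤ α c v ∧ α c v ≠ star (α x y) ∧ α c v ≠ α x y := by
  obtain ⟨c1, c2, p, hp, hxs, hvs⟩ := hlt
  have hvx : v ≠ x := by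
    intro h
    exact c2 ⟨h.symm, (hleaf c (h ▸ hcv).symm).symm⟩
  cases p with
  | nil => exact inv_base hinv hT hover hF hirr htight hxy hnd hcv hvx
  | @cons _ w _ h q =>
    have hw : w ≠ x := fun hf => hxs (by
      rw [SimpleGraph.Walk.support_cons]
      exact List.mem_cons_of_mem _ (hf ▸ q.start_mem_support))
    have hbase := inv_base hinv hT hover hF hirr htight hxy hnd h hw
    rw [SimpleGraph.Walk.cons_isPath_iff] at hp
    have hv' : v ∉ q.support := fun hf => hvs (by
      rw [SimpleGraph.Walk.support_cons]
      exact List.mem_cons_of_mem _ hf)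
    exact chain_inv hinv hT hover hF hirr hnt q hp.1 h hcv hp.2 hv'
      (fun _ hyv => hvs (by
        rw [SimpleGraph.Walk.support_cons]
        exact List.mem_cons.mpr (Or.inl hyv.symm))) hbase

end AuxAlpha

/-- **Shifting an `S`-tree over `F`.** Let `(T, α)` be a tight irredundant `S`-tree over a
family `F` of stars, rooted at a leaf `x` (with unique neighbour `y`), with
`r := α(e_x→)` nontrivial and nondegenerate, and let `s0` emulate `r` in `S→` for `F`.
Then `(T, α_{x,s0})` is an order-respecting `S`-tree over `F ∪ {{s0*}}`, in which the
star `{s0*}` is associated with `x` but with no other leaf of `T`. -/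
theorem shift_STree_over {U : Type*} [Lattice U] (star : U → U)
    (hinv : ∀ s : U, star (star s) = s)
    (hrev : ∀ r s : U, r ≤ s ↔ star s ≤ star r)
    (S : Set U) (hSstar : ∀ s ∈ S, star s ∈ S)
    (F : Set (Set U)) (hF : ∀ σ ∈ F, IsStarSet star σ)
    {V : Type} [Fintype V] (T : SimpleGraph V) (α : V → V → U)
    (hT : IsSTree star S T α) (hover : IsOver T α F)
    (htight : Tight star T α) (hirr : Irredundant T α)
    (x y : V) (hxy : T.Adj x y) (hleaf : ∀ z : V, T.Adj x z → z = y)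
    (hnt : ¬TrivialIn star S (α x y)) (hnd : star (α x y) ≠ α x y)
    (s0 : U) (hs0S : s0 ∈ S) (hem : EmulatesFor star S F (α x y) s0) :
    IsSTree star S T (shiftAlpha star T x y s0 α) ∧
      OrderRespecting T (shiftAlpha star T x y s0 α) ∧
      IsOver T (shiftAlpha star T x y s0 α) (F ∪ {({star s0} : Set U)}) ∧
      starAt T (shiftAlpha star T x y s0 α) x = {star s0} ∧
      ∀ ℓ : V, IsLeaf T ℓ → ℓ ≠ x →
        starAt T (shiftAlpha star T x y s0 α) ℓ ≠ {star s0} := by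
  obtain ⟨hconn, hac, hmem, hswap⟩ := hT
  have hT' : IsSTree star S T α := ⟨hconn, hac, hmem, hswap⟩
  -- the key invariant for edges pointing away from `x`
  have hinvE : ∀ a b : V, T.Adj a b → edgeLE T (x, y) (a, b) →
      α x y ≤ α a b ∧ α a b ≠ star (α x y) ∧ (α a b = α x y → (a, b) = (x, y)) := by
    intro a b hab hle
    rcases hle with he | hlt
    · refine ⟨?_, ?_, fun _ => he.symm⟩
      · injection he with i1 i2
        exact le_of_eq (by rw [← i1, ← i2])
      · injection he with i1 i2
        rw [← i1, ← i2]
        exact Ne.symm hnd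
    · have h := edge_inv hinv hT' hover hF hirr htight hxy hleaf hnt hnd hab hlt
      exact ⟨h.1, h.2.1, fun hf => absurd hf h.2.2⟩
  have htri : ∀ a b : V, T.Adj a b →
      (edgeLE T (x, y) (a, b) ∧ ¬edgeLE T (x, y) (b, a)) ∨
      (¬edgeLE T (x, y) (a, b) ∧ edgeLE T (x, y) (b, a)) := by
    intro a b hab
    rcases at_least_one hconn hxy hleaf hab with h | h
    · exact Or.inl ⟨h, fun h2 => not_both hac hxy hab h h2⟩
    · exact Or.inr ⟨fun h2 => not_both hac hxy hab h2 h, h⟩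
  have horder : OrderRespecting T α := order_resp hinv hT' hover hF hirr
  have hβpos : ∀ a b : V, edgeLE T (x, y) (a, b) →
      shiftAlpha star T x y s0 α a b = α a b ⊔ s0 := by
    intro a b h
    rw [shiftAlpha, if_pos h]
  have hβneg : ∀ a b : V, ¬edgeLE T (x, y) (a, b) →
      shiftAlpha star T x y s0 α a b = star (α b a ⊔ s0) := by
    intro a b h
    rw [shiftAlpha, if_neg h]
  have hS' : ∀ a b : V, T.Adj a b → edgeLE T (x, y) (a, b) → α a b ⊔ s0 ∈ S := by
    intro a b hab h
    exact hem.1.2 (α a b) (hmem a b hab) (hinvE a b hab h).2.1 (hinvE a b hab h).1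
  have part1 : IsSTree star S T (shiftAlpha star T x y s0 α) := by
    refine ⟨hconn, hac, ?_, ?_⟩
    · intro a b hab
      rcases htri a b hab with ⟨h, _⟩ | ⟨h, h'⟩
      · rw [hβpos a b h]
        exact hS' a b hab h
      · rw [hβneg a b h]
        exact hSstar _ (hS' b a hab.symm h')
    · intro a b hab
      rcases htri a b hab with ⟨h, h'⟩ | ⟨h, h'⟩
      · rw [hβpos a b h, hβneg b a h']
      · rw [hβneg a b h, hβpos b a h', hinv]
  have part2 : OrderRespecting T (shiftAlpha star T x y s0 α) := by
    intro e f he hf hef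
    rcases hef with rfl | hlt
    · exact le_refl _
    rcases htri e.1 e.2 he with ⟨hPe, _⟩ | ⟨hPe, hPe'⟩
    · have hPf : edgeLE T (x, y) (f.1, f.2) := edge_le_trans hac hxy hleaf he hf hPe hlt
      rw [hβpos _ _ hPe, hβpos _ _ hPf]
      exact sup_le_sup_right (horder e f he hf (Or.inr hlt)) s0
    · have hrevlt : edgeLT T (f.2, f.1) (e.2, e.1) := edgeLT_swap hlt
      have hle2 : α f.2 f.1 ≤ α e.2 e.1 :=
        horder (f.2, f.1) (e.2, e.1) hf.symm he.symm (Or.inr hrevlt)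
      rcases htri f.1 f.2 hf with ⟨hPf, _⟩ | ⟨hPf, _⟩
      · rw [hβneg _ _ hPe, hβpos _ _ hPf]
        have hstar : star (α f.1 f.2) ≤ α e.2 e.1 ⊔ s0 := by
          rw [← hswap f.1 f.2 hf]
          exact le_sup_of_le_left hle2
        have hkey : star (α e.2 e.1 ⊔ s0) ≤ α f.1 f.2 := by
          have h2 := (hrev (star (α f.1 f.2)) (α e.2 e.1 ⊔ s0)).mp hstar
          rw [hinv] at h2
          exact h2
        exact le_sup_of_le_left hkey
      · rw [hβneg _ _ hPe, hβneg _ _ hPf]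
        exact (hrev _ _).mp (sup_le_sup_right hle2 s0)
  have hnoyx : ¬ edgeLE T (x, y) (y, x) := no_yx hxy
  have hstarx : starAt T (shiftAlpha star T x y s0 α) x = {star s0} := by
    ext d
    constructor
    · rintro ⟨u, hux, rfl⟩
      have huy : u = y := hleaf u hux.symm
      subst huy
      rw [hβneg _ _ hnoyx, sup_eq_right.mpr hem.1.1]
      rfl
    · rintro rfl
      exact ⟨y, hxy.symm, by rw [hβneg _ _ hnoyx, sup_eq_right.mpr hem.1.1]⟩
  have hFmem : ∀ t : V, t ≠ x → starAt T (shiftAlpha star T x y s0 α) t ∈ F := by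
    intro t ht
    have hpoint : ∀ u : V, T.Adj u t →
        shiftAlpha star T x y s0 α u t = shiftFun star (α x y) s0 (α u t) := by
      intro u hut
      rcases htri u t hut with ⟨hP, _⟩ | ⟨hP, hP'⟩
      · rw [hβpos _ _ hP, shiftFun,
          if_pos (⟨(hinvE u t hut hP).1, (hinvE u t hut hP).2.1⟩ :
            α x y ≤ α u t ∧ α u t ≠ star (α x y))]
      · have h1 := hinvE t u hut.symm hP'
        have hcond : ¬(α x y ≤ α u t ∧ α u t ≠ star (α x y)) := by
          rintro ⟨hle, hne⟩
          have h2 : α x y ≤ star (α u t) := by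
            rw [← hswap u t hut]
            exact h1.1
          have hne2 : α x y ≠ α u t := by
            intro hf
            exact h1.2.1 (by rw [hswap u t hut, ← hf])
          have hne3 : α x y ≠ star (α u t) := by
            intro hf
            have hft : α t u = α x y := by rw [hswap u t hut, ← hf]
            have := h1.2.2 hft
            injection this with i1 _
            exact ht i1
          exact hnt ⟨α u t, hmem u t hut, lt_of_le_of_ne hle hne2,
            lt_of_le_of_ne h2 hne3⟩
        rw [hβneg _ _ hP, shiftFun, if_neg hcond, ← hswap u t hut]
    have hseteq : starAt T (shiftAlpha star T x y s0 α) t =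
        shiftFun star (α x y) s0 '' starAt T α t := by
      ext d
      constructor
      · rintro ⟨u, hut, rfl⟩
        exact ⟨α u t, ⟨u, hut, rfl⟩, (hpoint u hut).symm⟩
      · rintro ⟨d', ⟨u, hut, rfl⟩, rfl⟩
        exact ⟨u, hut, hpoint u hut⟩
    rw [hseteq]
    apply hem.2 _ (hover t)
    · rintro d ⟨u, hut, rfl⟩
      rcases htri u t hut with ⟨hP, _⟩ | ⟨hP, hP'⟩
      · refine ⟨⟨hmem u t hut, Or.inl (hinvE u t hut hP).1⟩, ?_⟩
        simp only [Set.mem_singleton_iff]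
        exact (hinvE u t hut hP).2.1
      · have h1 := hinvE t u hut.symm hP'
        refine ⟨⟨hmem u t hut, Or.inr (by rw [← hswap u t hut]; exact h1.1)⟩, ?_⟩
        simp only [Set.mem_singleton_iff]
        intro hf
        have hft : α t u = α x y := by rw [hswap u t hut, hf, hinv]
        have := h1.2.2 hft
        injection this with i1 _
        exact ht i1
    · obtain ⟨u, hut, hle⟩ := entry_edge hconn hxy hleaf ht
      exact ⟨α u t, ⟨u, hut, rfl⟩, (hinvE u t hut hle).1⟩
  refine ⟨part1, part2, ?_, hstarx, ?_⟩
  · intro t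
    by_cases ht : t = x
    · subst ht
      exact Or.inr hstarx
    · exact Or.inl (hFmem t ht)
  · intro ℓ hℓ hℓx heq
    obtain ⟨u, huℓ, hle⟩ := entry_edge hconn hxy hleaf hℓx
    have h1 : shiftAlpha star T x y s0 α u ℓ = star s0 := by
      have hm : shiftAlpha star T x y s0 α u ℓ ∈
          starAt T (shiftAlpha star T x y s0 α) ℓ := ⟨u, huℓ, rfl⟩
      rw [heq] at hm
      exact hm
    rw [hβpos _ _ hle] at h1
    have hFs : ({star s0} : Set U) ∈ F := by
      rw [← heq]
      exact hFmem ℓ hℓx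
    have hnd0 : star s0 ≠ s0 := by
      have hx0 := (hF _ hFs).1 (star s0) rfl
      rw [hinv] at hx0
      exact fun hf => hx0 hf.symm
    have hinfo := hinvE u ℓ huℓ hle
    have hαle : α u ℓ ≤ star s0 := h1 ▸ le_sup_left
    have h2 : α x y ≤ star (α u ℓ) := by
      have h3 := (hrev (α u ℓ) (star s0)).mp hαle
      rw [hinv] at h3
      exact hem.1.1.trans h3
    have hne2 : α x y ≠ α u ℓ := by
      intro hf
      apply hnd0
      rw [← h1, ← hf, sup_eq_right.mpr hem.1.1]
    have hne3 : α x y ≠ star (α u ℓ) := by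
      intro hf
      exact hinfo.2.1 (by rw [hf, hinv])
    exact hnt ⟨α u ℓ, hmem u ℓ huℓ, lt_of_le_of_ne hinfo.1 hne2,
      lt_of_le_of_ne h2 hne3⟩

end SepDuality
end

section
/- If (S→, ≤, *) is a nonempty finite separation system, then its oriented separations cannot all be trivial or co-trivial: there exists an unoriented separation s = {s→, s←} ∈ S such that neither s→ nor s← is trivial in S→. Indeed, if r is maximal among the separations trivial in S→, then both orientations of every s ∈ S witnessing the triviality of r are nontrivial. -/
open Classical

namespace SepDuality

/-- In a nonempty finite separation system, not all separations are trivial or co-trivial: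
there is a separation neither of whose orientations is trivial. Indeed, if `r` is maximal
among the trivial separations, then both orientations of any witness of its triviality
are nontrivial. -/
theorem exists_nontrivial {D : Type*} [PartialOrder D] [Fintype D] [Nonempty D]
    (star : D → D)
    (hinv : ∀ s : D, star (star s) = s)
    (hrev : ∀ r s : D, r ≤ s ↔ star s ≤ star r) :
    (∃ s : D, ¬TrivialIn star Set.univ s ∧ ¬TrivialIn star Set.univ (star s)) ∧
      ∀ r : D, TrivialIn star Set.univ r →
        (∀ r' : D, TrivialIn star Set.univ r' → ¬r < r') →
        ∀ s : D, r < s → r < star s →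
          ¬TrivialIn star Set.univ s ∧ ¬TrivialIn star Set.univ (star s) := by
  have key : ∀ r : D, (∀ r' : D, TrivialIn star Set.univ r' → ¬r < r') →
      ∀ s : D, r < s → r < star s →
        ¬TrivialIn star Set.univ s ∧ ¬TrivialIn star Set.univ (star s) := by
    intro r hmax s hs1 hs2
    exact ⟨fun hts => hmax s hts hs1, fun hts => hmax (star s) hts hs2⟩
  refine ⟨?_, fun r _ hmax => key r hmax⟩
  by_cases h : ∃ r, TrivialIn star Set.univ r
  · obtain ⟨r0, hr0⟩ := h
    obtain ⟨r, hr, hmax⟩ : ∃ r ∈ Finset.univ.filter fun r => TrivialIn star Set.univ r,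
        ∀ x ∈ Finset.univ.filter fun r => TrivialIn star Set.univ r, ¬r < x := by
      obtain ⟨r, hr⟩ :=
        Finset.exists_maximal (s := Finset.univ.filter fun r => TrivialIn star Set.univ r)
          ⟨r0, by simpa using hr0⟩
      exact ⟨r, hr.1, fun x hx => hr.not_gt hx⟩
    simp only [Finset.mem_filter, Finset.mem_univ, true_and] at hr hmax
    obtain ⟨s, -, hs1, hs2⟩ := hr
    exact ⟨s, key r (fun r' h' => hmax r' (by simpa using h')) s hs1 hs2⟩
  · push_neg at h
    obtain ⟨s⟩ := ‹Nonempty D›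
    exact ⟨s, h s, h (star s)⟩

end SepDuality
end

section
/- Let (S→, ≤, *) be a finite separation system and F ⊆ 2^{S→} a family of stars. If there exists an S-tree over F, then there exists a tight S-tree over the subfamily F' ⊆ F consisting of the antisymmetric stars in F. -/
open Classical

namespace SepDuality

section Aux

open SimpleGraph Walk

private lemma path_first_edge {W : Type*} {G : SimpleGraph W} {a b c : W}
    (p : G.Walk a b) (hp : p.IsPath) (he : s(a, c) ∈ p.edges) :
    ∃ (h : G.Adj a c) (q : G.Walk c b), p = Walk.cons h q ∧ s(a, c) ∉ q.edges := by
  cases p with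
  | nil => simp at he
  | cons h q =>
    rw [Walk.edges_cons, List.mem_cons] at he
    rcases he with he | he
    · rcases Sym2.eq_iff.mp he with ⟨-, rfl⟩ | ⟨h3, -⟩
      · exact ⟨h, q, rfl, fun hm =>
          ((Walk.cons_isPath_iff h q).mp hp).2 (q.fst_mem_support_of_mem_edges hm)⟩
      · exact absurd h3 h.ne
    · exact absurd (q.fst_mem_support_of_mem_edges he)
        ((Walk.cons_isPath_iff h q).mp hp).2

private lemma reach_of_walk {V : Type*} {T : SimpleGraph V} {P : V → Prop}
    {T' : SimpleGraph (Subtype P)}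
    (hadj : ∀ a b : Subtype P, T.Adj a.1 b.1 → T'.Adj a b)
    (t : V) (hclose : ∀ a b : V, P a → T.Adj a b → b ≠ t → P b) :
    ∀ {u v : V} (w : T.Walk u v), t ∉ w.support → ∀ (hu : P u) (hv : P v),
      T'.Reachable ⟨u, hu⟩ ⟨v, hv⟩
  | _, _, SimpleGraph.Walk.nil, _, _, _ => Reachable.refl _
  | u, v, SimpleGraph.Walk.cons h w, hw, hu, hv => by
      rw [SimpleGraph.Walk.support_cons, List.mem_cons] at hw
      push_neg at hw
      have hb := hclose _ _ hu h fun e => hw.2 (e ▸ w.start_mem_support)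
      exact ((hadj _ _ h).reachable).trans (reach_of_walk hadj t hclose w hw.2 hb hv)

private lemma cross_of_walk {V' : Type*} {T' : SimpleGraph V'} {Q : V' → Prop} {e : Sym2 V'}
    (hstep : ∀ a b : V', T'.Adj a b → s(a, b) ≠ e → Q a → Q b) :
    ∀ {u v : V'} (w : T'.Walk u v), e ∉ w.edges → Q u → Q v
  | _, _, SimpleGraph.Walk.nil, _, hu => hu
  | u, v, SimpleGraph.Walk.cons h w, he, hu => by
      rw [SimpleGraph.Walk.edges_cons, List.mem_cons] at he
      push_neg at he
      exact cross_of_walk hstep w he.2 (hstep _ _ h (fun hh => he.1 hh.symm) hu)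

private lemma exists_tight_aux {D : Type*} (star : D → D)
    (hinv : ∀ s : D, star (star s) = s) (F : Set (Set D)) :
    ∀ (n : ℕ) (V : Type) (instV : Fintype V) (T : SimpleGraph V) (α : V → V → D),
      Fintype.card V ≤ n →
      IsSTree star Set.univ T α → IsOver T α F →
      ∃ (V' : Type) (_ : Fintype V') (T' : SimpleGraph V') (α' : V' → V' → D),
        IsSTree star Set.univ T' α' ∧ Tight star T' α' ∧ IsOver T' α' F := by
  intro n
  induction n with
  | zero =>
    intro V instV T α hcard hST hover
    have hVempty : IsEmpty V := Fintype.card_eq_zero_iff.mp (Nat.le_zero.mp hcard)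
    obtain ⟨v⟩ := hST.1.nonempty
    exact (hVempty.false v).elim
  | succ n ih =>
    intro V instV T α hcard hST hover
    classical
    by_cases htight : Tight star T α
    · exact ⟨V, instV, T, α, hST, htight, hover⟩
    unfold Tight at htight
    push_neg at htight
    obtain ⟨t, d, hdmem, hdd, hdmem'⟩ := htight
    obtain ⟨x, hxt, hαx⟩ := hdmem
    obtain ⟨y, hyt, hαy⟩ := hdmem'
    obtain ⟨hconn, hac, -, hsym⟩ := hST
    have hxy : x ≠ y := by
      rintro rfl
      rw [hαx] at hαy
      exact hdd hαy.symm
    have hxt' : x ≠ t := hxt.ne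
    have hyt' : y ≠ t := hyt.ne
    have hpu : ∀ {u v : V} (p q : T.Walk u v), p.IsPath → q.IsPath → p = q :=
      fun p q hp hq => Subtype.ext_iff.mp (hac.path_unique ⟨p, hp⟩ ⟨q, hq⟩)
    have toPathAvoid : ∀ {u v : V} (w : T.Walk u v), t ∉ w.support →
        ∃ p : T.Walk u v, p.IsPath ∧ t ∉ p.support := fun w hw =>
      ⟨(w.toPath : T.Walk _ _), w.toPath.2, fun hmem => hw (w.support_toPath_subset hmem)⟩
    have hmidpath : ∀ {a b : V} (hat : T.Adj a t) (htb : T.Adj t b), a ≠ b →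
        (Walk.cons hat (Walk.cons htb Walk.nil)).IsPath := by
      intro a b hat htb hab
      simp [Walk.isPath_def, hat.ne, hab, htb.ne]
    set A : Set V := {v | ∃ w : T.Walk v x, t ∉ w.support} with hAdef
    set B : Set V := {v | ∃ w : T.Walk v y, t ∉ w.support} with hBdef
    have hnotA : ∀ z, T.Adj z t → z ≠ x → z ∉ A := by
      rintro z hzt hzx ⟨w, hw⟩
      obtain ⟨p, hp, hpt⟩ := toPathAvoid w hw
      have hq := hmidpath hzt hxt.symm hzx
      rw [hpu p _ hp hq] at hpt
      simp at hpt
    have hnotB : ∀ z, T.Adj z t → z ≠ y → z ∉ B := by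
      rintro z hzt hzy ⟨w, hw⟩
      obtain ⟨p, hp, hpt⟩ := toPathAvoid w hw
      have hq := hmidpath hzt hyt.symm hzy
      rw [hpu p _ hp hq] at hpt
      simp at hpt
    have hxA : x ∈ A := ⟨Walk.nil, by simp [Ne.symm hxt']⟩
    have hyB : y ∈ B := ⟨Walk.nil, by simp [Ne.symm hyt']⟩
    have hAB : ∀ z, z ∈ A → z ∈ B → False := by
      rintro z ⟨wa, hwa⟩ ⟨wb, hwb⟩
      have hnt : t ∉ (wa.reverse.append wb).support := by
        rw [Walk.mem_support_append_iff]
        rintro (hm | hm)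
        · rw [Walk.support_reverse, List.mem_reverse] at hm; exact hwa hm
        · exact hwb hm
      obtain ⟨p, hp, hpt⟩ := toPathAvoid _ hnt
      have hq := hmidpath hxt hyt.symm hxy
      rw [hpu p _ hp hq] at hpt
      simp at hpt
    have hxB : x ∉ B := fun hx => hAB x hxA hx
    have hnadjxy : ¬ T.Adj x y := by
      intro hadj
      have hp1 : hadj.toWalk.IsPath := by simp [Walk.isPath_def, hadj.ne]
      have hq := hmidpath hxt hyt.symm hxy
      have heq := hpu hadj.toWalk _ hp1 hq
      have ht2 : t ∈ hadj.toWalk.support := by rw [heq]; simp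
      simp [Adj.toWalk] at ht2
      rcases ht2 with h | h
      · exact hxt' h.symm
      · exact hyt' h.symm
    have hAclose : ∀ {u u' : V}, u ∈ A → T.Adj u u' → u' ≠ t → u' ∈ A := by
      rintro u u' ⟨w, hw⟩ hadj hu't
      refine ⟨Walk.cons hadj.symm w, ?_⟩
      rw [Walk.support_cons, List.mem_cons]
      rintro (h | h)
      · exact hu't h.symm
      · exact hw h
    have hBclose : ∀ {u u' : V}, u ∈ B → T.Adj u u' → u' ≠ t → u' ∈ B := by
      rintro u u' ⟨w, hw⟩ hadj hu't
      refine ⟨Walk.cons hadj.symm w, ?_⟩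
      rw [Walk.support_cons, List.mem_cons]
      rintro (h | h)
      · exact hu't h.symm
      · exact hw h
    have hAnbr : ∀ u, u ∈ A → T.Adj t u → u = x := by
      intro u hu hadj
      by_contra hne
      exact hnotA u hadj.symm hne hu
    have hBnbr : ∀ u, u ∈ B → T.Adj t u → u = y := by
      intro u hu hadj
      by_contra hne
      exact hnotB u hadj.symm hne hu
    have htP : ¬ (t ∈ A ∨ t ∈ B) := by
      rintro (⟨w, hw⟩ | ⟨w, hw⟩) <;> exact hw w.start_mem_support
    let V' : Type := {v : V // v ∈ A ∨ v ∈ B}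
    let X : V' := ⟨x, Or.inl hxA⟩
    let Y : V' := ⟨y, Or.inr hyB⟩
    have hXY : X ≠ Y := fun h => hxy (congrArg Subtype.val h)
    let T' : SimpleGraph V' :=
      { Adj := fun a b => T.Adj a.1 b.1 ∨ (a = X ∧ b = Y) ∨ (a = Y ∧ b = X)
        symm := Std.Symm.mk <| by
          rintro a b (h | ⟨h1, h2⟩ | ⟨h1, h2⟩)
          · exact Or.inl h.symm
          · exact Or.inr (Or.inr ⟨h2, h1⟩)
          · exact Or.inr (Or.inl ⟨h2, h1⟩)
        loopless := Std.Irrefl.mk <| by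
          rintro a (h | ⟨h1, h2⟩ | ⟨h1, h2⟩)
          · exact T.loopless.irrefl _ h
          · exact hXY (h1.symm.trans h2)
          · exact hXY (h2.symm.trans h1) }
    have hT'adj : ∀ a b : V',
        T'.Adj a b ↔ (T.Adj a.1 b.1 ∨ (a = X ∧ b = Y) ∨ (a = Y ∧ b = X)) :=
      fun a b => Iff.rfl
    let α' : V' → V' → D := fun a b =>
      if a = X ∧ b = Y then d else if a = Y ∧ b = X then star d else α a.1 b.1
    have hα'XY : α' X Y = d := if_pos ⟨rfl, rfl⟩
    have hα'YX : α' Y X = star d := by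
      have h1 : ¬(Y = X ∧ X = Y) := fun h => hXY h.2
      exact (if_neg h1).trans (if_pos ⟨rfl, rfl⟩)
    have hα'eval : ∀ a b : V', ¬(a = X ∧ b = Y) → ¬(a = Y ∧ b = X) → α' a b = α a.1 b.1 :=
      fun a b h1 h2 => (if_neg h1).trans (if_neg h2)
    have hTnot1 : ∀ a b : V', T.Adj a.1 b.1 → ¬(a = X ∧ b = Y) := by
      rintro a b hT ⟨rfl, rfl⟩
      exact hnadjxy hT
    have hTnot2 : ∀ a b : V', T.Adj a.1 b.1 → ¬(a = Y ∧ b = X) := by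
      rintro a b hT ⟨rfl, rfl⟩
      exact hnadjxy hT.symm
    have hα'T : ∀ a b : V', T.Adj a.1 b.1 → α' a b = α a.1 b.1 :=
      fun a b h => hα'eval a b (hTnot1 a b h) (hTnot2 a b h)
    have hsym' : ∀ a b : V', T'.Adj a b → α' b a = star (α' a b) := by
      intro a b hab
      rcases (hT'adj a b).mp hab with hT | ⟨h1, h2⟩ | ⟨h1, h2⟩
      · rw [hα'T a b hT, hα'T b a hT.symm]; exact hsym _ _ hT
      · subst h1; subst h2; rw [hα'XY, hα'YX]
      · subst h1; subst h2; rw [hα'XY, hα'YX, hinv]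
    -- connectivity
    have hadjlift : ∀ a b : V', T.Adj a.1 b.1 → T'.Adj a b :=
      fun a b h => (hT'adj a b).mpr (Or.inl h)
    have hcloseP : ∀ a b : V', True := fun _ _ => trivial
    have hPclose : ∀ a b : V, (a ∈ A ∨ a ∈ B) → T.Adj a b → b ≠ t → (b ∈ A ∨ b ∈ B) := by
      rintro a b (h | h) hadj hbt
      · exact Or.inl (hAclose h hadj hbt)
      · exact Or.inr (hBclose h hadj hbt)
    have hreach : ∀ c : V', T'.Reachable c X := by
      rintro ⟨u, hu⟩
      rcases id hu with h | h
      · obtain ⟨w, hw⟩ := h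
        exact reach_of_walk hadjlift t hPclose w hw hu (Or.inl hxA)
      · obtain ⟨w, hw⟩ := h
        have hYX : T'.Adj Y X := (hT'adj Y X).mpr (Or.inr (Or.inr ⟨rfl, rfl⟩))
        exact (reach_of_walk hadjlift t hPclose w hw hu (Or.inr hyB)).trans hYX.reachable
    have hconn' : T'.Connected := by
      rw [SimpleGraph.connected_iff]
      exact ⟨fun a b => (hreach a).trans (hreach b).symm, ⟨X⟩⟩
    -- crossing lemma
    have hstep : ∀ a b : V', T'.Adj a b → s(a, b) ≠ s(X, Y) → a.1 ∈ B → b.1 ∈ B := by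
      intro a b hab hne hQ
      rcases (hT'adj a b).mp hab with hT | ⟨h1, h2⟩ | ⟨h1, h2⟩
      · refine hBclose hQ hT fun hbt => htP ?_
        rw [← hbt]; exact b.2
      · rw [h1] at hQ; exact absurd hQ hxB
      · exact absurd (by rw [h1, h2, Sym2.eq_swap]) hne
    have hcross : ∀ (u v : V') (w : T'.Walk u v), s(X, Y) ∉ w.edges → u.1 ∈ B → v.1 ∈ B :=
      fun u v w he hu => cross_of_walk hstep w he hu
    have hacyc' : T'.IsAcyclic := by
      intro v c hc
      by_cases he : s(X, Y) ∈ c.edges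
      · have hXs : X ∈ c.support := c.fst_mem_support_of_mem_edges he
        have hc1 : (c.rotate X hXs).IsCycle := hc.rotate hXs
        have he1 : s(X, Y) ∈ (c.rotate X hXs).edges := (c.rotate_edges X hXs).mem_iff.mpr he
        revert hc1 he1
        generalize c.rotate X hXs = c1
        intro hc1 he1
        cases c1 with
        | nil => exact hc1.ne_nil rfl
        | @cons _ u₁ _ h p =>
          rw [Walk.cons_isCycle_iff] at hc1
          rw [Walk.edges_cons, List.mem_cons] at he1
          by_cases hu₁ : u₁ = Y
          · subst hu₁
            exact hxB (hcross Y X p hc1.2 hyB)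
          · have he2 : s(X, Y) ∈ p.edges := by
              rcases he1 with h1 | h1
              · rcases Sym2.eq_iff.mp h1 with ⟨-, h2⟩ | ⟨-, h2⟩
                · exact absurd h2.symm hu₁
                · exact absurd h2.symm hXY
              · exact h1
            have her : s(X, Y) ∈ p.reverse.edges := by
              rw [Walk.edges_reverse, List.mem_reverse]; exact he2
            obtain ⟨hadj2, q, -, hqe⟩ := path_first_edge p.reverse hc1.1.reverse her
            have hw2 : s(X, Y) ∉ (q.append h.symm.toWalk).edges := by
              rw [Walk.edges_append, List.mem_append]
              rintro (hm | hm)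
              · exact hqe hm
              · simp only [Adj.toWalk, Walk.edges_cons, Walk.edges_nil,
                  List.mem_singleton] at hm
                rcases Sym2.eq_iff.mp hm with ⟨h2, -⟩ | ⟨-, h2⟩
                · exact h.ne h2
                · exact hu₁ h2.symm
            exact hxB (hcross Y X _ hw2 hyB)
      · have hsub : ∀ e ∈ c.edges, e ∈ (T.comap (Subtype.val : V' → V)).edgeSet := by
          intro e hem
          revert hem
          induction e using Sym2.ind with
          | _ a b =>
            intro hem
            have hab : T'.Adj a b := Walk.adj_of_mem_edges c hem
            rw [SimpleGraph.mem_edgeSet]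
            rcases (hT'adj a b).mp hab with hT | ⟨h1, h2⟩ | ⟨h1, h2⟩
            · exact hT
            · rw [h1, h2] at hem; exact absurd hem he
            · rw [h1, h2, Sym2.eq_swap] at hem; exact absurd hem he
        have hc2 := hc.transfer hsub
        have hinj : Function.Injective (Subtype.val : V' → V) := Subtype.val_injective
        exact hac _ ((Walk.map_isCycle_iff_of_injective
          (f := (⟨Subtype.val, fun {a b} h => h⟩ :
            (T.comap (Subtype.val : V' → V)) →g T)) hinj).mpr hc2)
    -- over F
    have hover' : IsOver T' α' F := by
      intro s'
      by_cases hsX : s' = X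
      · subst hsX
        have hstar : starAt T' α' X = starAt T α x := by
          ext e
          constructor
          · rintro ⟨a, hadj, rfl⟩
            rcases (hT'adj a X).mp hadj with hT | ⟨h1, h2⟩ | ⟨h1, h2⟩
            · exact ⟨a.1, hT, (hα'T a X hT).symm⟩
            · exact absurd h2 hXY
            · refine ⟨t, hxt.symm, ?_⟩
              rw [h1, hα'YX, hsym x t hxt, hαx]
          · rintro ⟨v, hvx, rfl⟩
            by_cases hvt : v = t
            · subst hvt
              refine ⟨Y, (hT'adj Y X).mpr (Or.inr (Or.inr ⟨rfl, rfl⟩)), ?_⟩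
              rw [hα'YX, hsym x v hxt, hαx]
            · have hvA : v ∈ A := hAclose hxA hvx.symm hvt
              exact ⟨⟨v, Or.inl hvA⟩, (hT'adj _ X).mpr (Or.inl hvx), hα'T _ X hvx⟩
        rw [hstar]; exact hover x
      by_cases hsY : s' = Y
      · subst hsY
        have hstar : starAt T' α' Y = starAt T α y := by
          ext e
          constructor
          · rintro ⟨a, hadj, rfl⟩
            rcases (hT'adj a Y).mp hadj with hT | ⟨h1, h2⟩ | ⟨h1, h2⟩
            · exact ⟨a.1, hT, (hα'T a Y hT).symm⟩
            · refine ⟨t, hyt.symm, ?_⟩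
              rw [h1, hα'XY, hsym y t hyt, hαy, hinv]
            · exact absurd h2.symm hXY
          · rintro ⟨v, hvy, rfl⟩
            by_cases hvt : v = t
            · subst hvt
              refine ⟨X, (hT'adj X Y).mpr (Or.inr (Or.inl ⟨rfl, rfl⟩)), ?_⟩
              rw [hα'XY, hsym y v hyt, hαy, hinv]
            · have hvB : v ∈ B := hBclose hyB hvy.symm hvt
              exact ⟨⟨v, Or.inr hvB⟩, (hT'adj _ Y).mpr (Or.inl hvy), hα'T _ Y hvy⟩
        rw [hstar]; exact hover y
      · have hstar : starAt T' α' s' = starAt T α s'.1 := by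
          ext e
          constructor
          · rintro ⟨a, hadj, rfl⟩
            rcases (hT'adj a s').mp hadj with hT | ⟨h1, h2⟩ | ⟨h1, h2⟩
            · exact ⟨a.1, hT, (hα'T a s' hT).symm⟩
            · exact absurd h2 hsY
            · exact absurd h2 hsX
          · rintro ⟨v, hvs, rfl⟩
            have hvt : v ≠ t := by
              rintro rfl
              rcases s'.2 with hs | hs
              · exact hsX (Subtype.ext (hAnbr s'.1 hs hvs))
              · exact hsY (Subtype.ext (hBnbr s'.1 hs hvs))
            rcases id s'.2 with hs | hs
            · have hvA : v ∈ A := hAclose hs hvs.symm hvt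
              exact ⟨⟨v, Or.inl hvA⟩, (hT'adj _ s').mpr (Or.inl hvs), hα'T _ s' hvs⟩
            · have hvB : v ∈ B := hBclose hs hvs.symm hvt
              exact ⟨⟨v, Or.inr hvB⟩, (hT'adj _ s').mpr (Or.inl hvs), hα'T _ s' hvs⟩
        rw [hstar]; exact hover s'.1
    have hST' : IsSTree star Set.univ T' α' :=
      ⟨hconn', hacyc', fun _ _ _ => Set.mem_univ _, hsym'⟩
    have hcard' : Fintype.card V' ≤ n := by
      have hlt : Fintype.card V' < Fintype.card V := Fintype.card_subtype_lt htP
      omega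
    exact ih V' inferInstance T' α' hcard' hST' hover'

end Aux

/-- If there is an `S`-tree over a family `F` of stars, then there is a tight `S`-tree
over the subfamily of antisymmetric stars in `F`. -/
theorem tight_STree_over_antisymmetric {D : Type*} [PartialOrder D] [Fintype D]
    (star : D → D)
    (hinv : ∀ s : D, star (star s) = s)
    (hrev : ∀ r s : D, r ≤ s ↔ star s ≤ star r)
    (F : Set (Set D)) (hF : ∀ σ ∈ F, IsStarSet star σ)
    (h : ∃ (V : Type) (_ : Fintype V) (T : SimpleGraph V) (α : V → V → D),
      IsSTree star Set.univ T α ∧ IsOver T α F) :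
    ∃ (V : Type) (_ : Fintype V) (T : SimpleGraph V) (α : V → V → D),
      IsSTree star Set.univ T α ∧ Tight star T α ∧
      IsOver T α {σ ∈ F | ∀ s ∈ σ, star s ≠ s → star s ∉ σ} := by
  obtain ⟨V, instV, T, α, hST, hover⟩ := h
  obtain ⟨V', inst', T', α', hST', htight', hover'⟩ :=
    exists_tight_aux star hinv F (Fintype.card V) V instV T α le_rfl hST hover
  exact ⟨V', inst', T', α', hST', htight',
    fun t => ⟨hover' t, fun s hs hne => htight' t s hs hne⟩⟩

end SepDuality
end
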